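/- arXiv:1105.3187 — 4 statements merged into one kernel-verified Lean document; each statement's English description precedes it below -/
import Mathlib

section
/- Let d ∈ [1,+∞], let (D_t)_{t≥0} be a canonical domain system of order d, and let (f_t)_{t≥0} be a Loewner chain of order d over (D_t). For 0 ≤ s ≤ t define φ_{s,t} := f_t^{-1} ∘ f_s (well defined on D_s because f_s(D_s) ⊆ f_t(D_t) and f_t is injective). Then each φ_{s,t} is a holomorphic map from D_s into D_t, and the family (φ_{s,t})_{0≤s≤t} is an evolution family of order d over (D_t). -/
open MeasureTheory Set Filter Metric
open scoped ENNReal NNReal Topology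

noncomputable section

/-- The annulus `𝔸_r = {z : r < |z| < 1}`.  For `r = 0` this is the punctured
unit disk `𝔻*`. -/
def stdAnnulus (r : ℝ) : Set ℂ := {z : ℂ | r < ‖z‖ ∧ ‖z‖ < 1}

/-- The exterior of the closed unit disk, `ℂ ∖ cl 𝔻`. -/
def extDisk : Set ℂ := {z : ℂ | 1 < ‖z‖}

/-- The punctured plane `ℂ* = ℂ ∖ {0}`. -/
def punctPlane : Set ℂ := {z : ℂ | z ≠ 0}

/-- `ω(r) = -π / log r` for `r ∈ (0,1)`, and `ω(0) = 0`. -/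
def omegaFun (r : ℝ) : ℝ := if r = 0 then 0 else -Real.pi / Real.log r

/-- `f ∈ AC^d([0,∞))`: `f` is locally absolutely continuous on `[0,∞)` with
(a.e.) derivative of class `L^d_loc`; the derivative is represented by a
function `g` via the fundamental theorem of calculus. -/
def ACd (d : ℝ≥0∞) (f : ℝ → ℝ) : Prop :=
  ∃ g : ℝ → ℝ,
    (∀ T : ℝ, 0 < T → MemLp g d (volume.restrict (Icc (0:ℝ) T))) ∧
    ∀ a b : ℝ, 0 ≤ a → a ≤ b → f b - f a = ∫ t in a..b, g t

/-- A (doubly connected) canonical domain system of order `d`: a family of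
annuli `D_t = 𝔸_{r t}` such that `t ↦ ω(r t)` is non-increasing and of class
`AC^d` on `[0,∞)`. -/
structure CanonicalDomainSystem (d : ℝ≥0∞) where
  r : ℝ → ℝ
  r_nonneg : ∀ t : ℝ, 0 ≤ t → 0 ≤ r t
  r_lt_one : ∀ t : ℝ, 0 ≤ t → r t < 1
  omega_anti : ∀ ⦃s t : ℝ⦄, 0 ≤ s → s ≤ t → omegaFun (r t) ≤ omegaFun (r s)
  omega_ACd : ACd d fun t => omegaFun (r t)

/-- A Loewner chain of order `d` over the canonical domain system `D`. -/
structure IsLoewnerChain (d : ℝ≥0∞) (D : CanonicalDomainSystem d) (f : ℝ → ℂ → ℂ) : Prop where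
  holo : ∀ t : ℝ, 0 ≤ t → DifferentiableOn ℂ (f t) (stdAnnulus (D.r t))
  inj : ∀ t : ℝ, 0 ≤ t → InjOn (f t) (stdAnnulus (D.r t))
  mono : ∀ ⦃s t : ℝ⦄, 0 ≤ s → s ≤ t →
    f s '' stdAnnulus (D.r s) ⊆ f t '' stdAnnulus (D.r t)
  lc3 : ∀ S T : ℝ, 0 ≤ S → S ≤ T → ∀ K : Set ℂ, IsCompact K → K ⊆ stdAnnulus (D.r S) →
    ∃ k : ℝ → ℝ, (∀ x, 0 ≤ k x) ∧ MemLp k d (volume.restrict (Icc S T)) ∧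
      ∀ z ∈ K, ∀ s t : ℝ, S ≤ s → s ≤ t → t ≤ T →
        ‖f s z - f t z‖ ≤ ∫ ξ in s..t, k ξ

/-- An evolution family of order `d` over the canonical domain system `D`. -/
structure IsEvolutionFamily (d : ℝ≥0∞) (D : CanonicalDomainSystem d)
    (φ : ℝ → ℝ → ℂ → ℂ) : Prop where
  holo : ∀ ⦃s t : ℝ⦄, 0 ≤ s → s ≤ t → DifferentiableOn ℂ (φ s t) (stdAnnulus (D.r s))
  mapsTo : ∀ ⦃s t : ℝ⦄, 0 ≤ s → s ≤ t →
    MapsTo (φ s t) (stdAnnulus (D.r s)) (stdAnnulus (D.r t))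
  ef1 : ∀ s : ℝ, 0 ≤ s → ∀ z ∈ stdAnnulus (D.r s), φ s s z = z
  ef2 : ∀ ⦃s u t : ℝ⦄, 0 ≤ s → s ≤ u → u ≤ t → ∀ z ∈ stdAnnulus (D.r s),
    φ s t z = φ u t (φ s u z)
  ef3 : ∀ S T : ℝ, 0 ≤ S → S ≤ T → ∀ z ∈ stdAnnulus (D.r S),
    ∃ k : ℝ → ℝ, (∀ x, 0 ≤ k x) ∧ MemLp k d (volume.restrict (Icc S T)) ∧
      ∀ s u t : ℝ, S ≤ s → s ≤ u → u ≤ t → t ≤ T →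
        ‖φ s u z - φ s t z‖ ≤ ∫ ξ in u..t, k ξ

/-- The domain `𝒟 = {(z,t) : t ≥ 0, z ∈ D_t}` of a weak holomorphic vector field. -/
def vfDomain {d : ℝ≥0∞} (D : CanonicalDomainSystem d) : Set (ℂ × ℝ) :=
  {p : ℂ × ℝ | 0 ≤ p.2 ∧ p.1 ∈ stdAnnulus (D.r p.2)}

/-- A weak holomorphic vector field of order `d` over `D` (we regard `G` as a
function of `(z, t)` written `G z t`). -/
structure IsWeakHolVF (d : ℝ≥0∞) (D : CanonicalDomainSystem d) (G : ℂ → ℝ → ℂ) : Prop where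
  meas : ∀ z : ℂ, Measurable fun t : {t : ℝ // 0 ≤ t ∧ z ∈ stdAnnulus (D.r t)} => G z t.1
  holo : ∀ t : ℝ, 0 ≤ t → DifferentiableOn ℂ (fun z => G z t) (stdAnnulus (D.r t))
  bound : ∀ K : Set (ℂ × ℝ), IsCompact K → K ⊆ vfDomain D →
    ∃ k : ℝ → ℝ, (∀ x, 0 ≤ k x) ∧ MemLp k d (volume.restrict (Prod.snd '' K)) ∧
      ∀ p ∈ K, ‖G p.1 p.2‖ ≤ k p.2

/-- `G` is semicomplete: for every initial condition the Carathéodory initial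
value problem (in integral form) has a solution defined on all of `[s,∞)`. -/
def IsSemicomplete {d : ℝ≥0∞} (D : CanonicalDomainSystem d) (G : ℂ → ℝ → ℂ) : Prop :=
  ∀ s : ℝ, 0 ≤ s → ∀ z ∈ stdAnnulus (D.r s),
    ∃ w : ℝ → ℂ, w s = z ∧ (∀ t : ℝ, s ≤ t → w t ∈ stdAnnulus (D.r t)) ∧
      ∀ t : ℝ, s ≤ t → w t = z + ∫ ξ in s..t, G (w ξ) ξ

/-- `γ` is a closed curve (parametrized by `[0,1]`) contained in `A`. -/
def IsClosedCurveIn (γ : ℝ → ℂ) (A : Set ℂ) : Prop :=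
  ContinuousOn γ (Icc 0 1) ∧ γ 0 = γ 1 ∧ ∀ t ∈ Icc (0:ℝ) 1, γ t ∈ A

/-- The closed curve `γ` has index (winding number) `n` about the point `w`,
expressed via a continuous logarithm of `γ - w`. -/
def HasWindingNumber (γ : ℝ → ℂ) (w : ℂ) (n : ℤ) : Prop :=
  ∃ g : ℝ → ℂ, ContinuousOn g (Icc 0 1) ∧
    (∀ t ∈ Icc (0:ℝ) 1, γ t - w = Complex.exp (g t)) ∧
    g 1 - g 0 = 2 * Real.pi * Complex.I * n

/-- `I(f ∘ γ) = I(γ)` for every closed curve `γ` in `A`: `f` preserves the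
index about the origin of closed curves in `A`. -/
def PreservesWinding (f : ℂ → ℂ) (A : Set ℂ) : Prop :=
  ∀ γ : ℝ → ℂ, IsClosedCurveIn γ A → ∀ n : ℤ,
    (HasWindingNumber γ 0 n ↔ HasWindingNumber (fun t => f (γ t)) 0 n)

/-- The Loewner chain `f` is associated with the evolution family `φ`:
`f_s = f_t ∘ φ_{s,t}`. -/
def AssociatedLC {d : ℝ≥0∞} (D : CanonicalDomainSystem d) (f : ℝ → ℂ → ℂ)
    (φ : ℝ → ℝ → ℂ → ℂ) : Prop :=
  ∀ s t : ℝ, 0 ≤ s → s ≤ t → ∀ z ∈ stdAnnulus (D.r s), f s z = f t (φ s t z)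

/-- The union `⋃_{t ≥ 0} f_t(D_t)` of the ranges of a Loewner chain. -/
def chainUnion {d : ℝ≥0∞} (D : CanonicalDomainSystem d) (f : ℝ → ℂ → ℂ) : Set ℂ :=
  ⋃ t ∈ Ici (0:ℝ), f t '' stdAnnulus (D.r t)

/-- The evolution family `φ` has Loewner range `Ω`, i.e. there is an associated
Loewner chain, preserving winding numbers, whose union of ranges is `Ω`.
(Taking `Ω = 𝔸_ρ`, `𝔻*`, `ℂ ∖ cl 𝔻`, `ℂ*`, this defines the conformal types
I, II, III, IV respectively.) -/
def HasConformalType {d : ℝ≥0∞} (D : CanonicalDomainSystem d) (φ : ℝ → ℝ → ℂ → ℂ)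
    (Ω : Set ℂ) : Prop :=
  ∃ f : ℝ → ℂ → ℂ, IsLoewnerChain d D f ∧ AssociatedLC D f φ ∧
    (∀ t : ℝ, 0 ≤ t → PreservesWinding (f t) (stdAnnulus (D.r t))) ∧
    chainUnion D f = Ω

/-- `φ s t → 0` as `t → +∞`, uniformly on compact subsets of `D_s`. -/
def ConvergesToZeroOnCompacta {d : ℝ≥0∞} (D : CanonicalDomainSystem d)
    (φ : ℝ → ℝ → ℂ → ℂ) (s : ℝ) : Prop :=
  ∀ K : Set ℂ, IsCompact K → K ⊆ stdAnnulus (D.r s) →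
    TendstoUniformlyOn (fun t z => φ s t z) (fun _ => 0) atTop K

/-- `N(f)`: the free term of the Laurent expansion of `f`, holomorphic on the
annulus `𝔸_r`, computed as a mean value over the circle of radius `(1+r)/2`. -/
def freeTerm (r : ℝ) (f : ℂ → ℂ) : ℂ :=
  (2 * Real.pi : ℂ)⁻¹ *
    ∫ θ in (0:ℝ)..(2 * Real.pi), f ((((1 + r) / 2 : ℝ) : ℂ) * Complex.exp (θ * Complex.I))

/-- The Villat kernel `K_r`. -/
def villatKernel (r : ℝ) (z : ℂ) : ℂ :=
  (1 + z) / (1 - z) +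
    ∑' ν : ℕ,
      ((1 + (r : ℂ) ^ (2 * (ν + 1)) * z) / (1 - (r : ℂ) ^ (2 * (ν + 1)) * z) +
        (1 + z / (r : ℂ) ^ (2 * (ν + 1))) / (1 - z / (r : ℂ) ^ (2 * (ν + 1))))

/-- The class `V_r`: for `r ∈ (0,1)`, holomorphic functions on `𝔸_r` given by
the Villat-kernel representation with a pair of positive Borel measures on the
unit circle of total mass one; for `r = 0`, the (normalized) Carathéodory class
on the unit disk. -/
def MemClassV (r : ℝ) (p : ℂ → ℂ) : Prop :=
  (r = 0 →
    DifferentiableOn ℂ p (ball (0:ℂ) 1) ∧ p 0 = 1 ∧ ∀ z ∈ ball (0:ℂ) 1, 0 < (p z).re) ∧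
  (r ≠ 0 →
    DifferentiableOn ℂ p (stdAnnulus r) ∧
    ∃ μ₁ μ₂ : Measure ℂ,
      μ₁ {ξ : ℂ | ‖ξ‖ ≠ 1} = 0 ∧ μ₂ {ξ : ℂ | ‖ξ‖ ≠ 1} = 0 ∧
      μ₁ univ + μ₂ univ = 1 ∧
      ∀ z ∈ stdAnnulus r,
        p z = (∫ ξ, villatKernel r (z / ξ) ∂μ₁) +
          ∫ ξ, (1 - villatKernel r ((r : ℂ) * ξ / z)) ∂μ₂)
namespace LCEF

lemma isOpen_stdAnnulus (r : ℝ) : IsOpen (stdAnnulus r) := by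
  have : stdAnnulus r = ((fun z : ℂ => ‖z‖) ⁻¹' Ioi r) ∩ ((fun z : ℂ => ‖z‖) ⁻¹' Iio 1) := by
    ext z; simp [stdAnnulus]
  rw [this]
  exact (isOpen_Ioi.preimage continuous_norm).inter
    (isOpen_Iio.preimage continuous_norm)

lemma omegaFun_lt {a b : ℝ} (ha : 0 ≤ a) (hab : a < b) (hb : b < 1) :
    omegaFun a < omegaFun b := by
  have hb0 : 0 < b := lt_of_le_of_lt ha hab
  have hlogb : Real.log b < 0 := Real.log_neg hb0 hb
  unfold omegaFun
  rw [if_neg hb0.ne']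
  rcases eq_or_lt_of_le ha with h0 | h0
  · rw [if_pos h0.symm]
    rw [neg_div, lt_neg, neg_zero]
    exact div_neg_of_pos_of_neg Real.pi_pos hlogb
  · have hloga : Real.log a < Real.log b := Real.log_lt_log h0 hab
    rw [if_neg h0.ne']
    have h := div_lt_div_of_pos_left Real.pi_pos (neg_pos.mpr hlogb)
      (neg_lt_neg_iff.mpr hloga)
    rw [div_neg, div_neg, neg_lt_neg_iff] at h
    rw [neg_div, neg_div, neg_lt_neg_iff]
    exact h

lemma omegaFun_le {a b : ℝ} (ha : 0 ≤ a) (hab : a ≤ b) (hb : b < 1) :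
    omegaFun a ≤ omegaFun b := by
  rcases eq_or_lt_of_le hab with h | h
  · rw [h]
  · exact (omegaFun_lt ha h hb).le

variable {d : ℝ≥0∞} {D : CanonicalDomainSystem d}

lemma r_mono (D : CanonicalDomainSystem d) {s t : ℝ} (hs : 0 ≤ s) (hst : s ≤ t) :
    D.r t ≤ D.r s := by
  by_contra h
  push_neg at h
  exact absurd (D.omega_anti hs hst)
    (not_le.mpr (omegaFun_lt (D.r_nonneg s hs) h (D.r_lt_one t (hs.trans hst))))

lemma annulus_subset (D : CanonicalDomainSystem d) {s t : ℝ} (hs : 0 ≤ s) (hst : s ≤ t) :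
    stdAnnulus (D.r s) ⊆ stdAnnulus (D.r t) :=
  fun z hz => ⟨lt_of_le_of_lt (r_mono D hs hst) hz.1, hz.2⟩

/-- Left-continuity-type estimate for `r`. -/
lemma r_left (hd : 1 ≤ d) (D : CanonicalDomainSystem d) {t₀ c : ℝ} (ht₀ : 0 ≤ t₀)
    (hc : D.r t₀ < c) :
    ∃ δ > 0, ∀ t : ℝ, 0 ≤ t → t₀ - δ ≤ t → D.r t < c := by
  rcases eq_or_lt_of_le ht₀ with h0 | h0
  · subst h0
    exact ⟨1, one_pos, fun t ht _ => lt_of_le_of_lt (r_mono D le_rfl ht) hc⟩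
  by_cases hc1 : 1 ≤ c
  · exact ⟨1, one_pos, fun t ht _ => lt_of_lt_of_le (D.r_lt_one t ht) hc1⟩
  push_neg at hc1
  have hrt₀ : 0 ≤ D.r t₀ := D.r_nonneg t₀ ht₀
  have hcpos : 0 < c := lt_of_le_of_lt hrt₀ hc
  set e := omegaFun c - omegaFun (D.r t₀) with he_def
  have he : 0 < e := sub_pos.mpr (omegaFun_lt hrt₀ hc hc1)
  obtain ⟨g, hgmem, hgFTC⟩ := D.omega_ACd
  haveI : IsFiniteMeasure (volume.restrict (Icc (0:ℝ) t₀)) :=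
    ⟨by rw [Measure.restrict_apply_univ]; exact measure_Icc_lt_top⟩
  have hint : IntegrableOn g (Icc 0 t₀) volume := (hgmem t₀ h0).integrable hd
  have hP : ContinuousOn (fun x => ∫ τ in (0:ℝ)..x, g τ) (Icc 0 t₀) := by
    have := intervalIntegral.continuousOn_primitive_interval
      (a := (0:ℝ)) (b := t₀) (μ := volume) (f := g) (by rwa [uIcc_of_le ht₀])
    rwa [uIcc_of_le ht₀] at this
  have hcw : ContinuousWithinAt (fun x => ∫ τ in (0:ℝ)..x, g τ) (Icc 0 t₀) t₀ :=
    hP t₀ (right_mem_Icc.mpr ht₀)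
  rw [Metric.continuousWithinAt_iff] at hcw
  obtain ⟨δ, hδpos, hδ⟩ := hcw e he
  set δ' := min (δ / 2) t₀ with hδ'_def
  have hδ'1 : δ' ≤ δ / 2 := min_le_left _ _
  have hδ'2 : δ' ≤ t₀ := min_le_right _ _
  have hδ'pos : 0 < δ' := lt_min (by linarith) h0
  refine ⟨δ', hδ'pos, fun t ht htδ => ?_⟩
  set a := t₀ - δ' with ha_def
  have ha0 : 0 ≤ a := by simp only [ha_def]; linarith
  have hat₀ : a ≤ t₀ := by simp only [ha_def]; linarith
  have haI : a ∈ Icc (0:ℝ) t₀ := ⟨ha0, hat₀⟩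
  have hdist : dist a t₀ < δ := by
    rw [Real.dist_eq, abs_sub_lt_iff]
    constructor <;> simp only [ha_def] <;> linarith
  have hPdiff := hδ haI hdist
  have hra : D.r a < c := by
    by_contra hra
    push_neg at hra
    have h1 : omegaFun c ≤ omegaFun (D.r a) :=
      omegaFun_le hcpos.le hra (D.r_lt_one a ha0)
    have h2 : omegaFun (D.r t₀) - omegaFun (D.r a) = ∫ τ in a..t₀, g τ := hgFTC a t₀ ha0 hat₀
    have hint1 : IntervalIntegrable g volume 0 t₀ := by
      rw [intervalIntegrable_iff_integrableOn_Ioc_of_le ht₀]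
      exact hint.mono_set Ioc_subset_Icc_self
    have hint2 : IntervalIntegrable g volume 0 a := by
      rw [intervalIntegrable_iff_integrableOn_Ioc_of_le ha0]
      exact hint.mono_set ((Ioc_subset_Icc_self).trans (Icc_subset_Icc_right hat₀))
    have hsplit : (∫ τ in (0:ℝ)..t₀, g τ) - ∫ τ in (0:ℝ)..a, g τ = ∫ τ in a..t₀, g τ :=
      intervalIntegral.integral_interval_sub_left hint1 hint2
    rw [Real.dist_eq] at hPdiff
    have habs : |∫ τ in a..t₀, g τ| < e := by
      rw [← hsplit]; rwa [abs_sub_comm] at hPdiff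
    rw [← h2, abs_lt] at habs
    simp only [he_def] at habs
    linarith
  exact lt_of_le_of_lt (r_mono D ha0 (by linarith)) hra

/-- Smallness of integrals of a nonnegative integrable function over small windows. -/
lemma small_window {k : ℝ → ℝ} {A B : ℝ} (hAB : A ≤ B)
    (hint : IntegrableOn k (Icc A B) volume) (hnn : ∀ x, 0 ≤ k x) {c : ℝ}
    (hc : c ∈ Icc A B) {e : ℝ} (he : 0 < e) :
    ∃ δ > 0, ∀ a b : ℝ, A ≤ a → a ≤ b → b ≤ B → c - δ ≤ a → b ≤ c + δ →
      (∫ x in a..b, k x) ≤ e := by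
  have hP : ContinuousOn (fun x => ∫ τ in A..x, k τ) (Icc A B) := by
    have := intervalIntegral.continuousOn_primitive_interval
      (a := A) (b := B) (μ := volume) (f := k) (by rwa [uIcc_of_le hAB])
    rwa [uIcc_of_le hAB] at this
  have hcw := hP c hc
  rw [Metric.continuousWithinAt_iff] at hcw
  obtain ⟨δ, hδpos, hδ⟩ := hcw (e / 2) (by linarith)
  refine ⟨δ / 2, by linarith, fun a b hAa hab hbB ha hb => ?_⟩
  have haI : a ∈ Icc A B := ⟨hAa, hab.trans hbB⟩
  have hbI : b ∈ Icc A B := ⟨hAa.trans hab, hbB⟩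
  have hinta : IntervalIntegrable k volume A a := by
    rw [intervalIntegrable_iff_integrableOn_Ioc_of_le hAa]
    exact hint.mono_set ((Ioc_subset_Icc_self).trans (Icc_subset_Icc_right haI.2))
  have hintb : IntervalIntegrable k volume A b := by
    rw [intervalIntegrable_iff_integrableOn_Ioc_of_le hbI.1]
    exact hint.mono_set ((Ioc_subset_Icc_self).trans (Icc_subset_Icc_right hbI.2))
  have hsplit : (∫ τ in A..b, k τ) - ∫ τ in A..a, k τ = ∫ τ in a..b, k τ :=
    intervalIntegral.integral_interval_sub_left hintb hinta
  have hda : dist a c < δ := by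
    rw [Real.dist_eq, abs_sub_lt_iff]
    constructor <;> nlinarith [hab, hb, ha, hδpos]
  have hdb : dist b c < δ := by
    rw [Real.dist_eq, abs_sub_lt_iff]
    constructor <;> nlinarith [hab, hb, ha, hδpos]
  have h1 := hδ haI hda
  have h2 := hδ hbI hdb
  rw [Real.dist_eq] at h1 h2
  have := abs_lt.mp h1
  have := abs_lt.mp h2
  rw [← hsplit]
  linarith [abs_lt.mp h1, abs_lt.mp h2]



/-- Cauchy estimate: if two holomorphic functions are `η`-close on `closedBall w (2ε)`,
their derivatives are `η/ε`-close on `closedBall w ε`. -/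
lemma deriv_diff_small {F G : ℂ → ℂ} {U : Set ℂ} (hU : IsOpen U)
    (hF : DifferentiableOn ℂ F U) (hG : DifferentiableOn ℂ G U)
    {w : ℂ} {ε η : ℝ} (hε : 0 < ε) (hsub : closedBall w (2*ε) ⊆ U)
    (hbound : ∀ x ∈ closedBall w (2*ε), ‖F x - G x‖ ≤ η) :
    ∀ x ∈ closedBall w ε, ‖deriv F x - deriv G x‖ ≤ η / ε := by
  intro x hx
  have hball : closedBall x ε ⊆ closedBall w (2*ε) :=
    closedBall_subset_closedBall' (by
      have := mem_closedBall.mp hx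
      linarith)
  have hdiff : DifferentiableOn ℂ (fun y => F y - G y) U := hF.sub hG
  have hd : DiffContOnCl ℂ (fun y => F y - G y) (ball x ε) := by
    refine ⟨hdiff.mono ?_, (hdiff.continuousOn).mono ?_⟩
    · exact (ball_subset_closedBall.trans hball).trans hsub
    · exact ((closure_ball_subset_closedBall).trans hball).trans hsub
  have hkey := Complex.norm_deriv_le_of_forall_mem_sphere_norm_le hε hd
    (C := η) (fun y hy => by
      simpa using hbound y (hball (sphere_subset_closedBall hy)))
  have hFx : DifferentiableAt ℂ F x :=
    hF.differentiableAt (hU.mem_nhds (hsub (hball (mem_closedBall_self hε.le))))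
  have hGx : DifferentiableAt ℂ G x :=
    hG.differentiableAt (hU.mem_nhds (hsub (hball (mem_closedBall_self hε.le))))
  rw [deriv_fun_sub hFx hGx] at hkey
  simpa using hkey

/-- Lower Lipschitz bound from derivative close to a nonzero constant `c`. -/
lemma lower_lip {F : ℂ → ℂ} {U : Set ℂ} (hU : IsOpen U) (hF : DifferentiableOn ℂ F U)
    {w : ℂ} {ε : ℝ} (hsub : closedBall w ε ⊆ U) {c : ℂ}
    (hder : ∀ x ∈ closedBall w ε, ‖deriv F x - c‖ ≤ ‖c‖ / 2) :
    ∀ x ∈ closedBall w ε, ∀ y ∈ closedBall w ε,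
      ‖c‖ / 2 * ‖x - y‖ ≤ ‖F x - F y‖ := by
  intro x hx y hy
  have hdz : ∀ z ∈ closedBall w ε,
      HasDerivWithinAt (fun z => F z - c * z) (deriv F z - c) (closedBall w ε) z := by
    intro z hz
    have h1 : HasDerivAt F (deriv F z) z :=
      (hF.differentiableAt (hU.mem_nhds (hsub hz))).hasDerivAt
    have h2 : HasDerivAt (fun z : ℂ => c * z) c z := by
      simpa using (hasDerivAt_id z).const_mul c
    exact (h1.sub h2).hasDerivWithinAt
  have key : ‖(F x - c * x) - (F y - c * y)‖ ≤ ‖c‖ / 2 * ‖x - y‖ :=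
    Convex.norm_image_sub_le_of_norm_hasDerivWithin_le hdz
      (fun z hz => by simpa using hder z hz)
      (convex_closedBall _ _) hy hx
  have h5 : ‖c * (x - y)‖ - ‖(F x - c * x) - (F y - c * y)‖ ≤ ‖F x - F y‖ := by
    have hid : F x - F y = (c * (x - y)) - (-((F x - c * x) - (F y - c * y))) := by ring
    rw [hid]
    refine le_trans ?_ (norm_sub_norm_le _ _)
    rw [norm_neg]
  have h6 : ‖c * (x - y)‖ = ‖c‖ * ‖x - y‖ := by
    simp [norm_mul]
  rw [h6] at h5
  nlinarith [norm_nonneg (x - y)]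

/-- Minimum modulus trap: a holomorphic function on a closed ball whose boundary values
stay `m`-away from `F w` attains every value `m/2`-close to `F w` inside the ball. -/
lemma exists_preimage {F : ℂ → ℂ} {U : Set ℂ} (hU : IsOpen U) (hF : DifferentiableOn ℂ F U)
    {w : ℂ} {ε m : ℝ} (hε : 0 < ε) (hsub : closedBall w ε ⊆ U)
    (hsphere : ∀ x ∈ sphere w ε, m ≤ ‖F x - F w‖)
    (hne : ∃ᶠ z in 𝓝 w, F z ≠ F w)
    {q : ℂ} (hq : ‖F w - q‖ < m / 2) :
    ∃ x ∈ closedBall w ε, F x = q := by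
  have hd : DiffContOnCl ℂ F (ball w ε) := by
    refine ⟨hF.mono (ball_subset_closedBall.trans hsub), (hF.continuousOn).mono ?_⟩
    exact (closure_ball_subset_closedBall).trans hsub
  have himg := DiffContOnCl.ball_subset_image_closedBall hd hε
    (fun z hz => by simpa using hsphere z hz) hne
  have hqmem : q ∈ ball (F w) (m / 2) := by
    rw [mem_ball, dist_comm]
    simpa [Complex.dist_eq] using hq
  obtain ⟨x, hx, hfx⟩ := himg hqmem
  exact ⟨x, hx, hfx⟩

/-- If `F` satisfies a lower-Lipschitz bound at `w` then `F` is frequently `≠ F w` near `w`. -/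
lemma freq_ne {F : ℂ → ℂ} {w : ℂ} {c ε : ℝ} (hε : 0 < ε) (hc : 0 < c)
    (hlow : ∀ x ∈ closedBall w ε, c * ‖x - w‖ ≤ ‖F x - F w‖) :
    ∃ᶠ z in 𝓝 w, F z ≠ F w := by
  have h1 : ∀ᶠ z in 𝓝 w, z ∈ closedBall w ε := by
    rw [Filter.eventually_iff]
    exact closedBall_mem_nhds w hε
  have h2 : ∀ᶠ z in 𝓝[≠] w, z ∈ closedBall w ε := h1.filter_mono nhdsWithin_le_nhds
  have h3 : ∀ᶠ z in 𝓝[≠] w, z ≠ w := by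
    rw [Filter.eventually_iff]
    exact self_mem_nhdsWithin
  have h4 : ∀ᶠ z in 𝓝[≠] w, F z ≠ F w := by
    filter_upwards [h2, h3] with z hz hzw
    intro heq
    have hl := hlow z hz
    rw [heq, sub_self, norm_zero] at hl
    have : 0 < ‖z - w‖ := by
      rw [norm_pos_iff]
      exact sub_ne_zero.mpr hzw
    nlinarith
  exact (h4.frequently).filter_mono nhdsWithin_le_nhds



lemma freq_ne' {F : ℂ → ℂ} {w : ℂ} {c ε : ℝ} (hε : 0 < ε) (hc : 0 < c)
    (hlow : ∀ x ∈ closedBall w ε, c * ‖x - w‖ ≤ ‖F x - F w‖) :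
    ∃ᶠ z in 𝓝 w, F z ≠ F w := by
  have h2 : ∀ᶠ z in 𝓝[≠] w, z ∈ closedBall w ε :=
    (Filter.eventually_iff.mpr (closedBall_mem_nhds w hε)).filter_mono nhdsWithin_le_nhds
  have h3 : ∀ᶠ z in 𝓝[≠] w, z ≠ w := Filter.eventually_iff.mpr self_mem_nhdsWithin
  have h4 : ∀ᶠ z in 𝓝[≠] w, F z ≠ F w := by
    filter_upwards [h2, h3] with z hz hzw heq
    have hl := hlow z hz
    rw [heq, sub_self, norm_zero] at hl
    have : 0 < ‖z - w‖ := by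
      rw [norm_pos_iff]; exact sub_ne_zero.mpr hzw
    nlinarith
  exact (h4.frequently).filter_mono nhdsWithin_le_nhds

/-- An injective holomorphic function on an open set has nonvanishing derivative. -/
lemma deriv_ne_zero_of_injOn {F : ℂ → ℂ} {U : Set ℂ} (hU : IsOpen U)
    (hF : DifferentiableOn ℂ F U) (hinj : InjOn F U) {w : ℂ} (hw : w ∈ U) :
    deriv F w ≠ 0 := by
  intro hder
  have hA : AnalyticAt ℂ F w := hF.analyticAt (hU.mem_nhds hw)
  have hGA : AnalyticAt ℂ (fun z => F z - F w) w := hA.sub analyticAt_const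
  have hne : ¬ (∀ᶠ z in 𝓝 w, F z - F w = 0) := by
    intro h
    obtain ⟨ρ, hρpos, hρ⟩ := Metric.eventually_nhds_iff.mp (h.and (hU.eventually_mem hw))
    have hzw : w + (ρ/2 : ℝ) ≠ w := by
      simp only [ne_eq, add_eq_left]
      intro h'
      have : (ρ/2 : ℝ) = 0 := by exact_mod_cast h'
      linarith
    have hd : dist (w + (ρ/2 : ℝ)) w < ρ := by
      simp only [Complex.dist_eq, add_sub_cancel_left, Complex.norm_real, Real.norm_eq_abs]
      rw [abs_of_pos (half_pos hρpos)]
      linarith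
    obtain ⟨h1, h2⟩ := hρ hd
    exact hzw (hinj h2 hw (sub_eq_zero.mp h1))
  have horder : analyticOrderAt (fun z => F z - F w) w ≠ ⊤ := fun h => hne (analyticOrderAt_eq_top.mp h)
  obtain ⟨n, hn⟩ := WithTop.ne_top_iff_exists.mp horder
  obtain ⟨g, hg, hgw, hfg⟩ := hGA.analyticOrderAt_eq_natCast.mp hn.symm
  have hn0 : n ≠ 0 := by
    intro h0; subst h0
    have h1 := hfg.self_of_nhds
    simp only [sub_self, pow_zero, one_smul] at h1
    exact hgw h1.symm
  have hn1 : n ≠ 1 := by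
    intro h1; subst h1
    have hdg : HasDerivAt (fun z => (z - w) ^ 1 • g z) (g w) w := by
      simp only [pow_one, smul_eq_mul]
      have h2 : HasDerivAt (fun z : ℂ => z - w) 1 w := (hasDerivAt_id w).sub_const w
      have h3 : HasDerivAt g (deriv g w) w := hg.differentiableAt.hasDerivAt
      simpa using h2.fun_mul h3
    have heq : deriv (fun z => F z - F w) w = g w := by
      rw [Filter.EventuallyEq.deriv_eq hfg]
      exact hdg.deriv
    rw [deriv_sub_const, hder] at heq
    exact hgw heq.symm
  have hn2 : 2 ≤ n := by omega
  obtain ⟨β, hβ⟩ := IsAlgClosed.exists_pow_nat_eq (k := ℂ) (g w) (n := n) (by omega)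
  have hβ0 : β ≠ 0 := by
    rintro rfl; exact hgw (by rw [← hβ, zero_pow hn0])
  set h : ℂ → ℂ := fun z => β * Complex.exp (Complex.log (g z / g w) / (n : ℂ)) with hh
  have habsgw : 0 < ‖g w‖ := by
    rw [norm_pos_iff]; exact hgw
  have hgsmall : ∀ᶠ z in 𝓝 w, ‖g z - g w‖ < ‖g w‖ / 2 := by
    have := hg.continuousAt.eventually_mem
      (Metric.ball_mem_nhds (g w) (half_pos habsgw))
    filter_upwards [this] with z hz
    rw [mem_ball, Complex.dist_eq] at hz
    exact hz
  have hev : ∀ᶠ z in 𝓝 w,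
      ((F z - F w = (z - w) ^ n • g z ∧ z ∈ U) ∧ AnalyticAt ℂ g z) ∧
        ‖g z - g w‖ < ‖g w‖ / 2 :=
    ((hfg.and (hU.eventually_mem hw)).and hg.eventually_analyticAt).and hgsmall
  obtain ⟨ρ, hρpos, hρ⟩ := Metric.eventually_nhds_iff.mp hev
  set ρ' := ρ / 2 with hρ'
  have hρ'pos : 0 < ρ' := half_pos hρpos
  have hball : ∀ z ∈ closedBall w ρ',
      ((F z - F w = (z - w) ^ n • g z ∧ z ∈ U) ∧ AnalyticAt ℂ g z) ∧
        ‖g z - g w‖ < ‖g w‖ / 2 :=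
    fun z hz => hρ (lt_of_le_of_lt (mem_closedBall.mp hz) (by simp only [hρ']; linarith))
  have hgz0 : ∀ z ∈ closedBall w ρ', g z ≠ 0 := by
    intro z hz h0
    have := (hball z hz).2
    rw [h0, zero_sub, norm_neg] at this
    linarith
  have hslit : ∀ z ∈ closedBall w ρ', (g z / g w) ∈ Complex.slitPlane := by
    intro z hz
    rw [Complex.mem_slitPlane_iff]
    left
    have h1 : ‖g z / g w - 1‖ < 1/2 := by
      rw [div_sub_one hgw, norm_div]
      rw [div_lt_iff₀ habsgw]
      calc ‖g z - g w‖ < ‖g w‖ / 2 := (hball z hz).2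
        _ = 1/2 * ‖g w‖ := by ring
    have h2 := Complex.abs_re_le_norm (g z / g w - 1)
    have h3 : (g z / g w - 1).re = (g z / g w).re - 1 := by simp
    rw [h3] at h2
    have := abs_lt.mp (lt_of_le_of_lt h2 h1)
    linarith
  have hpow : ∀ z ∈ closedBall w ρ', h z ^ n = g z := by
    intro z hz
    rw [hh]
    simp only
    rw [mul_pow, ← Complex.exp_nat_mul, mul_div_cancel₀ _ (Nat.cast_ne_zero.mpr hn0 : (n:ℂ) ≠ 0),
      Complex.exp_log (div_ne_zero (hgz0 z hz) hgw), hβ]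
    field_simp
  have hdiffh : ∀ z ∈ closedBall w ρ', DifferentiableAt ℂ h z := by
    intro z hz
    have hgz : DifferentiableAt ℂ g z := (hball z hz).1.2.differentiableAt
    exact (((hgz.div_const (g w)).clog (hslit z hz)).div_const (n : ℂ)).cexp.const_mul β
  set H : ℂ → ℂ := fun z => (z - w) * h z with hH
  have hdiffH : ∀ z ∈ closedBall w ρ', DifferentiableAt ℂ H z := by
    intro z hz
    exact ((differentiableAt_id.sub_const w).mul (hdiffh z hz))
  have hhw : h w = β := by
    rw [hh]
    simp [div_self hgw, Complex.log_one]
  have hHcont : ContinuousAt h w := (hdiffh w (mem_closedBall_self hρ'pos.le)).continuousAt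
  have hhev : ∀ᶠ z in 𝓝 w, ‖h z - β‖ < ‖β‖ / 2 := by
    have hb := hHcont.eventually_mem (Metric.ball_mem_nhds (h w)
      (half_pos (norm_pos_iff.mpr hβ0)))
    filter_upwards [hb] with z hz
    rw [mem_ball, Complex.dist_eq, hhw] at hz
    exact hz
  obtain ⟨ρ₁, hρ₁pos, hρ₁⟩ := Metric.eventually_nhds_iff.mp hhev
  set ρ₂ := min (ρ₁ / 2) ρ' with hρ₂def
  have hρ₂pos : 0 < ρ₂ := lt_min (half_pos hρ₁pos) hρ'pos
  have hρ₂sub : closedBall w ρ₂ ⊆ closedBall w ρ' :=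
    closedBall_subset_closedBall (min_le_right _ _)
  have hβpos : 0 < ‖β‖ := norm_pos_iff.mpr hβ0
  have hhlow : ∀ z ∈ closedBall w ρ₂, ‖β‖ / 2 < ‖h z‖ := by
    intro z hz
    have h1 : dist z w < ρ₁ :=
      lt_of_le_of_lt (mem_closedBall.mp hz)
        (lt_of_le_of_lt (min_le_left _ _) (by linarith))
    have h2 := hρ₁ h1
    have h3 : ‖β‖ - ‖h z‖ ≤ ‖h z - β‖ := by
      have := norm_sub_norm_le β (h z)
      rw [show β - h z = -(h z - β) by ring, norm_neg] at this
      simpa using this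
    linarith
  set m := ρ₂ * (‖β‖ / 2) with hm
  have hmpos : 0 < m := mul_pos hρ₂pos (half_pos hβpos)
  have hdH : DiffContOnCl ℂ H (ball w ρ₂) := by
    refine ⟨fun z hz => (hdiffH z (hρ₂sub (ball_subset_closedBall hz))).differentiableWithinAt,
      fun z hz => ((hdiffH z (hρ₂sub (closure_ball_subset_closedBall hz))).continuousAt).continuousWithinAt⟩
  have hHw : H w = 0 := by simp [hH]
  have hsphere : ∀ z ∈ sphere w ρ₂, m ≤ ‖H z - H w‖ := by
    intro z hz
    rw [hHw, sub_zero, hH]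
    simp only [norm_mul]
    have h1 : ‖z - w‖ = ρ₂ := by
      rw [← Complex.dist_eq]
      exact mem_sphere.mp hz
    rw [h1, hm]
    exact mul_le_mul_of_nonneg_left (hhlow z (sphere_subset_closedBall hz)).le hρ₂pos.le
  have hfreq : ∃ᶠ z in 𝓝 w, H z ≠ H w := by
    apply freq_ne' hρ₂pos (half_pos hβpos)
    intro x hx
    rw [hHw, sub_zero, hH]
    simp only [norm_mul]
    calc ‖β‖ / 2 * ‖x - w‖
        = ‖x - w‖ * (‖β‖ / 2) := by ring
      _ ≤ ‖x - w‖ * ‖h x‖ :=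
        mul_le_mul_of_nonneg_left (hhlow x hx).le (norm_nonneg _)
  have himg := DiffContOnCl.ball_subset_image_closedBall hdH hρ₂pos
    (fun z hz => hsphere z hz) hfreq
  rw [hHw] at himg
  set y₀ : ℂ := ((m/4 : ℝ) : ℂ) with hy₀def
  have hy₀abs : ‖y₀‖ = m/4 := by
    rw [hy₀def, Complex.norm_real, Real.norm_eq_abs, abs_of_pos (by linarith)]
  have hy₀ne : y₀ ≠ 0 := by
    rw [hy₀def]
    exact_mod_cast (by positivity : (m/4 : ℝ) ≠ 0)
  set ζ : ℂ := Complex.exp ((2 * Real.pi / n : ℝ) * Complex.I) with hζdef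
  have hζabs : ‖ζ‖ = 1 := Complex.norm_exp_ofReal_mul_I _
  have hn0' : (n:ℂ) ≠ 0 := Nat.cast_ne_zero.mpr hn0
  have hζn : ζ ^ n = 1 := by
    rw [hζdef, ← Complex.exp_nat_mul]
    rw [show ((n:ℂ) * (((2 * Real.pi / n : ℝ) : ℂ) * Complex.I)) = 2 * Real.pi * Complex.I by
      push_cast; field_simp]
    exact Complex.exp_two_pi_mul_I
  have hζ1 : ζ ≠ 1 := by
    intro h1
    obtain ⟨k, hk⟩ := Complex.exp_eq_one_iff.mp h1
    have h2πI : (2 * Real.pi * Complex.I : ℂ) ≠ 0 := by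
      simp [Real.pi_ne_zero, Complex.I_ne_zero]
    have h2 : (((2 * Real.pi / n : ℝ) : ℂ) * Complex.I) * n = 2 * Real.pi * Complex.I := by
      push_cast; field_simp
    have h3 : ((k:ℂ) * n - 1) * (2 * Real.pi * Complex.I) = 0 := by
      linear_combination h2 - (n:ℂ) * hk
    have h4 : (k:ℂ) * n = 1 := by
      rcases mul_eq_zero.mp h3 with h | h
      · linear_combination h
      · exact absurd h h2πI
    have h5 : ((k * (n:ℤ) : ℤ) : ℂ) = ((1:ℤ) : ℂ) := by push_cast; exact h4
    have h6 : k * (n:ℤ) = 1 := Int.cast_injective h5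
    have h7 : (n:ℤ) ∣ 1 := Dvd.intro_left k h6
    have h8 := Int.le_of_dvd one_pos h7
    omega
  have hy₀b : y₀ ∈ ball (0:ℂ) (m/2) := by
    rw [mem_ball, Complex.dist_eq, sub_zero, hy₀abs]; linarith
  have hζy₀b : ζ * y₀ ∈ ball (0:ℂ) (m/2) := by
    rw [mem_ball, Complex.dist_eq, sub_zero, norm_mul, hζabs, one_mul, hy₀abs]; linarith
  obtain ⟨x₁, hx₁b, hx₁⟩ := himg hy₀b
  obtain ⟨x₂, hx₂b, hx₂⟩ := himg hζy₀b
  have hFx : ∀ x ∈ closedBall w ρ₂, F x - F w = H x ^ n := by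
    intro x hx
    have h1 := (hball x (hρ₂sub hx)).1.1.1
    rw [h1, smul_eq_mul, hH]
    simp only
    rw [mul_pow, hpow x (hρ₂sub hx)]
  have hF12 : F x₁ = F x₂ := by
    have e1 := hFx x₁ hx₁b
    have e2 := hFx x₂ hx₂b
    rw [hx₁] at e1
    rw [hx₂] at e2
    rw [mul_pow, hζn, one_mul] at e2
    have : F x₁ - F w = F x₂ - F w := by rw [e1, e2]
    linear_combination this
  have hx12 : x₁ = x₂ :=
    hinj ((hball x₁ (hρ₂sub hx₁b)).1.1.2) ((hball x₂ (hρ₂sub hx₂b)).1.1.2) hF12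
  have hyy : y₀ = ζ * y₀ := by
    conv_lhs => rw [← hx₁]
    rw [← hx₂, hx12]
  have hζeq : ζ = 1 := by
    have h : y₀ * ζ = y₀ * 1 := by rw [mul_one, mul_comm]; exact hyy.symm
    exact mul_left_cancel₀ hy₀ne h
  exact hζ1 hζeq

end LCEF

section MainLemmas
namespace LCEF

variable {d : ℝ≥0∞} {D : CanonicalDomainSystem d} {f : ℝ → ℂ → ℂ} {φ : ℝ → ℝ → ℂ → ℂ}

/-- Holomorphy of `φ s t = (f t)⁻¹ ∘ f s`. -/
lemma phi_holo (hf : IsLoewnerChain d D f)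
    (hφ : ∀ s t : ℝ, 0 ≤ s → s ≤ t → ∀ z ∈ stdAnnulus (D.r s),
      φ s t z ∈ stdAnnulus (D.r t) ∧ f t (φ s t z) = f s z)
    {s t : ℝ} (hs : 0 ≤ s) (hst : s ≤ t) :
    DifferentiableOn ℂ (φ s t) (stdAnnulus (D.r s)) := by
  intro z₀ hz₀
  have h0t : (0:ℝ) ≤ t := hs.trans hst
  obtain ⟨hw₀mem, hw₀eq⟩ := hφ s t hs hst z₀ hz₀
  set w₀ := φ s t z₀ with hw₀
  have hopen_t := isOpen_stdAnnulus (D.r t)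
  have hopen_s := isOpen_stdAnnulus (D.r s)
  have hft := hf.holo t h0t
  have hder : deriv (f t) w₀ ≠ 0 :=
    deriv_ne_zero_of_injOn hopen_t hft (hf.inj t h0t) hw₀mem
  obtain ⟨p, hp⟩ := hft.analyticAt (hopen_t.mem_nhds hw₀mem)
  have hstrict : HasStrictDerivAt (f t) (deriv (f t) w₀) w₀ := by
    have h1 := hp.hasStrictDerivAt
    rwa [← h1.hasDerivAt.deriv] at h1
  have hFD := hstrict.hasStrictFDerivAt_equiv hder
  set g := hFD.localInverse (f t) _ w₀ with hgdef
  have hrinv : ∀ᶠ y in 𝓝 (f t w₀), f t (g y) = y := hFD.eventually_right_inverse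
  have hgcont : ContinuousAt g (f t w₀) := hFD.localInverse_continuousAt
  have hgw : g (f t w₀) = w₀ := hFD.localInverse_apply_image
  have hgdiff : DifferentiableAt ℂ g (f t w₀) := hFD.to_localInverse.differentiableAt
  have hfs_diff : DifferentiableAt ℂ (f s) z₀ :=
    (hf.holo s hs).differentiableAt (hopen_s.mem_nhds hz₀)
  have hfsz₀ : f s z₀ = f t w₀ := hw₀eq.symm
  have htend : Filter.Tendsto (f s) (𝓝 z₀) (𝓝 (f t w₀)) := by
    rw [← hfsz₀]
    exact hfs_diff.continuousAt
  have hev1 : ∀ᶠ z in 𝓝 z₀, f t (g (f s z)) = f s z := htend.eventually hrinv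
  have hev2 : ∀ᶠ z in 𝓝 z₀, g (f s z) ∈ stdAnnulus (D.r t) := by
    have h2 : Filter.Tendsto (fun z => g (f s z)) (𝓝 z₀) (𝓝 (g (f t w₀))) :=
      hgcont.tendsto.comp htend
    rw [hgw] at h2
    exact h2.eventually (hopen_t.eventually_mem hw₀mem)
  have hev3 : ∀ᶠ z in 𝓝 z₀, z ∈ stdAnnulus (D.r s) := hopen_s.eventually_mem hz₀
  have hevEq : ∀ᶠ z in 𝓝 z₀, φ s t z = g (f s z) := by
    filter_upwards [hev1, hev2, hev3] with z h1 h2 h3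
    obtain ⟨hm, he⟩ := hφ s t hs hst z h3
    exact hf.inj t h0t hm h2 (by rw [he, h1])
  have hgf : DifferentiableAt ℂ (fun z => g (f s z)) z₀ := by
    have h2 : DifferentiableAt ℂ g (f s z₀) := by rw [hfsz₀]; exact hgdiff
    exact h2.comp z₀ hfs_diff
  exact (Filter.EventuallyEq.differentiableAt_iff hevEq).mpr hgf |>.differentiableWithinAt

set_option maxHeartbeats 1600000 in
/-- The local absolute-continuity estimate for `φ · · z` near a parameter point `(s₀, t₀)`. -/
lemma local_est (hd : 1 ≤ d) (hf : IsLoewnerChain d D f)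
    (hφ : ∀ s t : ℝ, 0 ≤ s → s ≤ t → ∀ z ∈ stdAnnulus (D.r s),
      φ s t z ∈ stdAnnulus (D.r t) ∧ f t (φ s t z) = f s z)
    {S T : ℝ} (hS : 0 ≤ S) (hST : S ≤ T) {z : ℂ} (hz : z ∈ stdAnnulus (D.r S))
    {s₀ t₀ : ℝ} (hs₀ : S ≤ s₀) (hst₀ : s₀ ≤ t₀) (ht₀T : t₀ ≤ T) :
    ∃ δ > 0, ∃ k : ℝ → ℝ, (∀ x, 0 ≤ k x) ∧ MemLp k d (volume.restrict (Icc S T)) ∧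
      ∀ s u t : ℝ, S ≤ s → s ≤ u → u ≤ t → t ≤ T →
        |s - s₀| < δ → |u - t₀| < δ → |t - t₀| < δ →
        ‖φ s u z - φ s t z‖ ≤ ∫ ξ in u..t, k ξ := by
  have h0s₀ : 0 ≤ s₀ := hS.trans hs₀
  have h0t₀ : 0 ≤ t₀ := h0s₀.trans hst₀
  have h0T : 0 ≤ T := h0t₀.trans ht₀T
  have hzs₀ : z ∈ stdAnnulus (D.r s₀) := annulus_subset D hS hs₀ hz
  obtain ⟨hw₀mem, hw₀eq⟩ := hφ s₀ t₀ h0s₀ hst₀ z hzs₀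
  set w₀ := φ s₀ t₀ z with hw₀def
  have hopen := isOpen_stdAnnulus (D.r t₀)
  have hft₀ : DifferentiableOn ℂ (f t₀) (stdAnnulus (D.r t₀)) := hf.holo t₀ h0t₀
  set c := deriv (f t₀) w₀ with hcdef
  have hc : c ≠ 0 := deriv_ne_zero_of_injOn hopen hft₀ (hf.inj t₀ h0t₀) hw₀mem
  have hca : 0 < ‖c‖ := norm_pos_iff.mpr hc
  have hderiv_cont : ContinuousAt (deriv (f t₀)) w₀ :=
    (((hft₀.analyticOnNhd hopen).deriv) w₀ hw₀mem).continuousAt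
  obtain ⟨ε₁, hε₁pos, hε₁⟩ := Metric.eventually_nhds_iff.mp
    (hderiv_cont.eventually_mem (Metric.ball_mem_nhds c (by positivity : (0:ℝ) < ‖c‖/8)))
  have hw₀abs1 : D.r t₀ < ‖w₀‖ := hw₀mem.1
  have hw₀abs2 : ‖w₀‖ < 1 := hw₀mem.2
  set ε := min (min (ε₁/4) ((‖w₀‖ - D.r t₀)/4)) ((1 - ‖w₀‖)/4) with hεdef
  have hεpos : 0 < ε := by
    apply lt_min (lt_min (by linarith) (by linarith)) (by linarith)
  have hεa : ε ≤ ε₁/4 := le_trans (min_le_left _ _) (min_le_left _ _)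
  have hεb : ε ≤ (‖w₀‖ - D.r t₀)/4 := le_trans (min_le_left _ _) (min_le_right _ _)
  have hεc : ε ≤ (1 - ‖w₀‖)/4 := min_le_right _ _
  have hderiv_ball : ∀ x ∈ closedBall w₀ (2*ε),
      ‖deriv (f t₀) x - c‖ ≤ ‖c‖/8 := by
    intro x hx
    have h1 := hε₁ (lt_of_le_of_lt (mem_closedBall.mp hx) (by linarith))
    rw [mem_ball, Complex.dist_eq] at h1
    exact h1.le
  obtain ⟨δ₁, hδ₁pos, hδ₁⟩ := r_left hd D h0t₀
    (show D.r t₀ < ‖w₀‖ - 2*ε by linarith)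
  set S' := max S (t₀ - δ₁) with hS'def
  have hS'0 : 0 ≤ S' := le_trans hS (le_max_left _ _)
  have hSS' : S ≤ S' := le_max_left _ _
  have hS't₀ : S' ≤ t₀ := max_le (hs₀.trans hst₀) (by linarith)
  have hS'T : S' ≤ T := hS't₀.trans ht₀T
  have hrS' : D.r S' < ‖w₀‖ - 2*ε := hδ₁ S' hS'0 (le_max_right _ _)
  have hball_sub : ∀ t' : ℝ, S' ≤ t' → 0 ≤ t' →
      closedBall w₀ (2*ε) ⊆ stdAnnulus (D.r t') := by
    intro t' ht' h0t' x hx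
    have hdx := mem_closedBall.mp hx
    rw [Complex.dist_eq] at hdx
    have h1 : ‖w₀‖ - ‖x‖ ≤ 2*ε := by
      have := norm_sub_norm_le w₀ x
      rw [show w₀ - x = -(x - w₀) by ring, norm_neg] at this
      simpa using le_trans this hdx
    have h2 : ‖x‖ - ‖w₀‖ ≤ 2*ε := by
      have := norm_sub_norm_le x w₀
      simpa using le_trans this hdx
    constructor
    · calc D.r t' ≤ D.r S' := r_mono D hS'0 ht'
        _ < ‖w₀‖ - 2*ε := hrS'
        _ ≤ ‖x‖ := by linarith
    · calc ‖x‖ ≤ ‖w₀‖ + 2*ε := by linarith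
        _ < 1 := by linarith
  obtain ⟨k₁, hk₁nn, hk₁mem, hk₁bd⟩ := hf.lc3 S' T hS'0 hS'T (closedBall w₀ (2*ε))
    (isCompact_closedBall _ _) (hball_sub S' le_rfl hS'0)
  obtain ⟨k₀, hk₀nn, hk₀mem, hk₀bd⟩ := hf.lc3 S T hS hST {z} isCompact_singleton
    (by simpa using hz)
  haveI fin1 : IsFiniteMeasure (volume.restrict (Icc S' T)) :=
    ⟨by rw [Measure.restrict_apply_univ]; exact measure_Icc_lt_top⟩
  haveI fin0 : IsFiniteMeasure (volume.restrict (Icc S T)) :=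
    ⟨by rw [Measure.restrict_apply_univ]; exact measure_Icc_lt_top⟩
  have hk₁int : IntegrableOn k₁ (Icc S' T) volume := hk₁mem.integrable hd
  have hk₀int : IntegrableOn k₀ (Icc S T) volume := hk₀mem.integrable hd
  set η := ‖c‖ * ε / 16 with hηdef
  have hηpos : 0 < η := by positivity
  obtain ⟨δ₂, hδ₂pos, hδ₂⟩ := small_window hS'T hk₁int hk₁nn
    (c := t₀) ⟨hS't₀, ht₀T⟩ hηpos
  obtain ⟨δ₃, hδ₃pos, hδ₃⟩ := small_window hST hk₀int hk₀nn
    (c := s₀) ⟨hs₀, hst₀.trans ht₀T⟩ hηpos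
  set δ := min (min δ₂ δ₃) δ₁ with hδdef
  have hδpos : 0 < δ := lt_min (lt_min hδ₂pos hδ₃pos) hδ₁pos
  have hδa : δ ≤ δ₂ := le_trans (min_le_left _ _) (min_le_left _ _)
  have hδb : δ ≤ δ₃ := le_trans (min_le_left _ _) (min_le_right _ _)
  have hδc : δ ≤ δ₁ := min_le_right _ _
  have hS'le : ∀ x : ℝ, S ≤ x → t₀ - δ₁ ≤ x → S' ≤ x := fun x h1 h2 => max_le h1 h2
  clear_value w₀ c ε η δ S'
  refine ⟨δ, hδpos, fun ξ => (2/‖c‖) * (Icc S' T).indicator k₁ ξ, ?_, ?_, ?_⟩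
  · intro x
    apply mul_nonneg (by positivity)
    by_cases hx : x ∈ Icc S' T
    · rw [indicator_of_mem hx]; exact hk₁nn x
    · rw [indicator_of_notMem hx]
  · have h1 : MemLp ((Icc S' T).indicator k₁) d (volume.restrict (Icc S T)) := by
      have hint : Icc S' T ∩ Icc S T = Icc S' T :=
        inter_eq_self_of_subset_left (Icc_subset_Icc_left hSS')
      refine ⟨?_, ?_⟩
      · rw [aestronglyMeasurable_indicator_iff measurableSet_Icc,
          Measure.restrict_restrict measurableSet_Icc, hint]
        exact hk₁mem.1
      · rw [eLpNorm_indicator_eq_eLpNorm_restrict measurableSet_Icc,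
          Measure.restrict_restrict measurableSet_Icc, hint]
        exact hk₁mem.2
    exact h1.const_mul _
  intro s u t hSs hsu hut htT hsδ huδ htδ
  have h0s : 0 ≤ s := hS.trans hSs
  have hS'u : S' ≤ u := by
    apply hS'le u (hSs.trans hsu)
    have := abs_lt.mp huδ
    linarith
  have hS't : S' ≤ t := by
    apply hS'le t (hSs.trans (hsu.trans hut))
    have := abs_lt.mp htδ
    linarith
  have hzs : z ∈ stdAnnulus (D.r s) := annulus_subset D hS hSs hz
  obtain ⟨hvu_mem, hvu_eq⟩ := hφ s u h0s hsu z hzs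
  obtain ⟨hvt_mem, hvt_eq⟩ := hφ s t h0s (hsu.trans hut) z hzs
  have hUopen : IsOpen (stdAnnulus (D.r S')) := isOpen_stdAnnulus _
  have hclose : ∀ t' : ℝ, S' ≤ t' → t' ≤ T → |t' - t₀| < δ → ∀ x ∈ closedBall w₀ (2*ε),
      ‖f t' x - f t₀ x‖ ≤ η := by
    intro t' h1 h2 h3 x hx
    have habs := abs_lt.mp h3
    rcases le_total t' t₀ with h | h
    · refine le_trans (hk₁bd x hx t' t₀ h1 h ht₀T) (hδ₂ t' t₀ h1 h ht₀T ?_ ?_) <;> linarith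
    · rw [norm_sub_rev]
      refine le_trans (hk₁bd x hx t₀ t' hS't₀ h h2) (hδ₂ t₀ t' hS't₀ h h2 ?_ ?_) <;> linarith
  have hdiffS' : ∀ t' : ℝ, 0 ≤ t' → S' ≤ t' →
      DifferentiableOn ℂ (f t') (stdAnnulus (D.r S')) := by
    intro t' h0 h1
    exact (hf.holo t' h0).mono (annulus_subset D hS'0 h1)
  have hderiv' : ∀ t' : ℝ, 0 ≤ t' → S' ≤ t' → t' ≤ T → |t' - t₀| < δ →
      ∀ x ∈ closedBall w₀ ε, ‖deriv (f t') x - c‖ ≤ ‖c‖/2 := by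
    intro t' h0 h1 h2 h3 x hx
    have hc1 := deriv_diff_small hUopen (hdiffS' t' h0 h1) (hdiffS' t₀ h0t₀ hS't₀)
      hεpos (hball_sub S' le_rfl hS'0) (fun y hy => hclose t' h1 h2 h3 y hy) x hx
    have hc2 : ‖deriv (f t₀) x - c‖ ≤ ‖c‖/8 :=
      hderiv_ball x (closedBall_subset_closedBall (by linarith) hx)
    have hηε : η / ε = ‖c‖/16 := by
      rw [hηdef]
      field_simp
    rw [hηε] at hc1
    calc ‖deriv (f t') x - c‖
        ≤ ‖deriv (f t') x - deriv (f t₀) x‖ +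
            ‖deriv (f t₀) x - c‖ := by
          have := norm_add_le (deriv (f t') x - deriv (f t₀) x) (deriv (f t₀) x - c)
          simpa using this
      _ ≤ ‖c‖/16 + ‖c‖/8 := add_le_add hc1 hc2
      _ ≤ ‖c‖/2 := by linarith
  have hball_ε : closedBall w₀ ε ⊆ stdAnnulus (D.r S') :=
    (closedBall_subset_closedBall (by linarith)).trans (hball_sub S' le_rfl hS'0)
  have hlip : ∀ t' : ℝ, 0 ≤ t' → S' ≤ t' → t' ≤ T → |t' - t₀| < δ →
      ∀ x ∈ closedBall w₀ ε, ∀ y ∈ closedBall w₀ ε,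
        ‖c‖/2 * ‖x - y‖ ≤ ‖f t' x - f t' y‖ := by
    intro t' h0 h1 h2 h3
    exact lower_lip hUopen (hdiffS' t' h0 h1) hball_ε (hderiv' t' h0 h1 h2 h3)
  have hpclose : ‖f s z - f s₀ z‖ ≤ η := by
    have habs := abs_lt.mp hsδ
    rcases le_total s s₀ with h | h
    · refine le_trans (hk₀bd z rfl s s₀ hSs h (hst₀.trans ht₀T))
        (hδ₃ s s₀ hSs h (hst₀.trans ht₀T) ?_ ?_) <;> linarith
    · rw [norm_sub_rev]
      refine le_trans (hk₀bd z rfl s₀ s hs₀ h (hsu.trans (hut.trans htT)))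
        (hδ₃ s₀ s hs₀ h (hsu.trans (hut.trans htT)) ?_ ?_) <;> linarith
  have htrap : ∀ t' : ℝ, 0 ≤ t' → S' ≤ t' → t' ≤ T → |t' - t₀| < δ → s ≤ t' →
      φ s t' z ∈ closedBall w₀ ε := by
    intro t' h0 h1 h2 h3 hst'
    obtain ⟨hvmem, hveq⟩ := hφ s t' h0s hst' z hzs
    have hw₀ball : w₀ ∈ closedBall w₀ ε := mem_closedBall_self hεpos.le
    have hsphere : ∀ x ∈ sphere w₀ ε, ‖c‖/2*ε ≤ ‖f t' x - f t' w₀‖ := by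
      intro x hx
      have h4 := hlip t' h0 h1 h2 h3 x (sphere_subset_closedBall hx) w₀ hw₀ball
      have h5 : ‖x - w₀‖ = ε := by
        rw [← Complex.dist_eq]; exact mem_sphere.mp hx
      rw [h5] at h4
      exact h4
    have hw₀2ball : w₀ ∈ closedBall w₀ (2*ε) := mem_closedBall_self (by linarith)
    have hcenter : ‖f t' w₀ - f s z‖ < (‖c‖/2*ε)/2 := by
      have ha : ‖f t' w₀ - f t₀ w₀‖ ≤ η := hclose t' h1 h2 h3 w₀ hw₀2ball
      have hb : ‖f t₀ w₀ - f s z‖ ≤ η := by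
        rw [hw₀eq, norm_sub_rev]
        exact hpclose
      calc ‖f t' w₀ - f s z‖
          ≤ ‖f t' w₀ - f t₀ w₀‖ + ‖f t₀ w₀ - f s z‖ := by
            have := norm_add_le (f t' w₀ - f t₀ w₀) (f t₀ w₀ - f s z)
            simpa using this
        _ ≤ η + η := add_le_add ha hb
        _ < (‖c‖/2*ε)/2 := by rw [hηdef]; nlinarith
    have hfreq : ∃ᶠ x in 𝓝 w₀, f t' x ≠ f t' w₀ :=
      freq_ne' (F := f t') hεpos (half_pos hca)
        (fun x hx => hlip t' h0 h1 h2 h3 x hx w₀ hw₀ball)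
    obtain ⟨x', hx'b, hx'⟩ := exists_preimage hUopen (hdiffS' t' h0 h1) hεpos hball_ε
      hsphere hfreq hcenter
    have hx'mem : x' ∈ stdAnnulus (D.r t') :=
      (hball_sub t' h1 h0) (closedBall_subset_closedBall (by linarith) hx'b)
    have heq := hf.inj t' h0 hvmem hx'mem (by rw [hveq, hx'])
    rw [heq]
    exact hx'b
  have h0u : 0 ≤ u := h0s.trans hsu
  have h0t : 0 ≤ t := h0u.trans hut
  have huT : u ≤ T := hut.trans htT
  have hvuball := htrap u h0u hS'u huT huδ hsu
  have hvtball := htrap t h0t hS't htT htδ (hsu.trans hut)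
  have key : ‖c‖/2 * ‖φ s u z - φ s t z‖ ≤
      ‖f t (φ s u z) - f t (φ s t z)‖ :=
    hlip t h0t hS't htT htδ _ hvuball _ hvtball
  have hftvt : f t (φ s t z) = f u (φ s u z) := by rw [hvt_eq, hvu_eq]
  have hbd : ‖f t (φ s u z) - f u (φ s u z)‖ ≤ ∫ ξ in u..t, k₁ ξ := by
    have h6 := hk₁bd (φ s u z) (closedBall_subset_closedBall (by linarith) hvuball)
      u t hS'u hut htT
    rwa [norm_sub_rev] at h6
  have hIeq : ∫ ξ in u..t, (2/‖c‖) * (Icc S' T).indicator k₁ ξ =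
      (2/‖c‖) * ∫ ξ in u..t, k₁ ξ := by
    rw [← intervalIntegral.integral_const_mul]
    apply intervalIntegral.integral_congr
    intro x hx
    rw [uIcc_of_le hut] at hx
    have hxm : x ∈ Icc S' T := ⟨hS'u.trans hx.1, hx.2.trans htT⟩
    simp only [indicator_of_mem hxm]
  rw [hIeq]
  have hchain : ‖φ s u z - φ s t z‖ =
      (2/‖c‖) * (‖c‖/2 * ‖φ s u z - φ s t z‖) := by
    field_simp
  rw [hchain]
  calc (2/‖c‖) * (‖c‖/2 * ‖φ s u z - φ s t z‖)
      ≤ (2/‖c‖) * ‖f t (φ s u z) - f t (φ s t z)‖ :=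
        mul_le_mul_of_nonneg_left key (by positivity)
    _ = (2/‖c‖) * ‖f t (φ s u z) - f u (φ s u z)‖ := by rw [hftvt]
    _ ≤ (2/‖c‖) * ∫ ξ in u..t, k₁ ξ := mul_le_mul_of_nonneg_left hbd (by positivity)

end LCEF
end MainLemmas

section Global
namespace LCEF

variable {d : ℝ≥0∞} {D : CanonicalDomainSystem d} {f : ℝ → ℂ → ℂ} {φ : ℝ → ℝ → ℂ → ℂ}

set_option maxHeartbeats 1600000 in
lemma global_est (hd : 1 ≤ d) (hf : IsLoewnerChain d D f)
    (hφ : ∀ s t : ℝ, 0 ≤ s → s ≤ t → ∀ z ∈ stdAnnulus (D.r s),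
      φ s t z ∈ stdAnnulus (D.r t) ∧ f t (φ s t z) = f s z)
    {S T : ℝ} (hS : 0 ≤ S) (hST : S ≤ T) {z : ℂ} (hz : z ∈ stdAnnulus (D.r S)) :
    ∃ k : ℝ → ℝ, (∀ x, 0 ≤ k x) ∧ MemLp k d (volume.restrict (Icc S T)) ∧
      ∀ s u t : ℝ, S ≤ s → s ≤ u → u ≤ t → t ≤ T →
        ‖φ s u z - φ s t z‖ ≤ ∫ ξ in u..t, k ξ := by
  classical
  set Δ : Set (ℝ × ℝ) := {p : ℝ × ℝ | S ≤ p.1 ∧ p.1 ≤ p.2 ∧ p.2 ≤ T} with hΔdef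
  have hΔcomp : IsCompact Δ := by
    have hsub : Δ ⊆ Icc S T ×ˢ Icc S T := fun p hp =>
      ⟨⟨hp.1, hp.2.1.trans hp.2.2⟩, ⟨hp.1.trans hp.2.1, hp.2.2⟩⟩
    have hclosed : IsClosed Δ := by
      have h1 : IsClosed {p : ℝ × ℝ | S ≤ p.1} :=
        isClosed_le continuous_const continuous_fst
      have h2 : IsClosed {p : ℝ × ℝ | p.1 ≤ p.2} :=
        isClosed_le continuous_fst continuous_snd
      have h3 : IsClosed {p : ℝ × ℝ | p.2 ≤ T} :=
        isClosed_le continuous_snd continuous_const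
      have : Δ = {p : ℝ × ℝ | S ≤ p.1} ∩ ({p : ℝ × ℝ | p.1 ≤ p.2} ∩ {p : ℝ × ℝ | p.2 ≤ T}) := by
        ext p; simp [hΔdef, and_assoc]
      rw [this]
      exact h1.inter (h2.inter h3)
    exact (isCompact_Icc.prod isCompact_Icc).of_isClosed_subset hclosed hsub
  have hloc : ∀ p : Δ, ∃ δ > 0, ∃ k : ℝ → ℝ, (∀ x, 0 ≤ k x) ∧
      MemLp k d (volume.restrict (Icc S T)) ∧
      ∀ s u t : ℝ, S ≤ s → s ≤ u → u ≤ t → t ≤ T →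
        |s - (p : ℝ × ℝ).1| < δ → |u - (p : ℝ × ℝ).2| < δ → |t - (p : ℝ × ℝ).2| < δ →
        ‖φ s u z - φ s t z‖ ≤ ∫ ξ in u..t, k ξ :=
    fun p => local_est hd hf hφ hS hST hz p.2.1 p.2.2.1 p.2.2.2
  choose δloc hδloc kloc hklocnn hklocmem hklocbd using hloc
  have hcover : Δ ⊆ ⋃ p : Δ, ball (p : ℝ × ℝ) (δloc p) := fun q hq =>
    mem_iUnion.mpr ⟨⟨q, hq⟩, mem_ball_self (hδloc _)⟩
  obtain ⟨I, hI⟩ := hΔcomp.elim_finite_subcover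
    (fun p : Δ => ball (p : ℝ × ℝ) (δloc p)) (fun p => isOpen_ball) hcover
  obtain ⟨lam, hlampos, hlam⟩ := lebesgue_number_lemma_of_metric hΔcomp
    (c := fun i : I => ball ((i : Δ) : ℝ × ℝ) (δloc i))
    (fun i => isOpen_ball)
    (fun q hq => by
      obtain ⟨p, hp⟩ := mem_iUnion.mp (hI hq)
      obtain ⟨hpI, hmem⟩ := mem_iUnion.mp hp
      exact mem_iUnion.mpr ⟨⟨p, hpI⟩, hmem⟩)
  haveI fin0 : IsFiniteMeasure (volume.restrict (Icc S T)) :=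
    ⟨by rw [Measure.restrict_apply_univ]; exact measure_Icc_lt_top⟩
  set k : ℝ → ℝ := fun ξ => ∑ i ∈ I, kloc i ξ with hkdef
  have hknn : ∀ x, 0 ≤ k x := fun x => Finset.sum_nonneg fun i _ => hklocnn i x
  have hkmem : MemLp k d (volume.restrict (Icc S T)) :=
    memLp_finsetSum I fun i _ => hklocmem i
  refine ⟨k, hknn, hkmem, ?_⟩
  intro s u t hSs hsu hut htT
  rcases eq_or_lt_of_le hut with heq | hlt
  · subst heq
    simp only [intervalIntegral.integral_same, sub_self, norm_zero, le_refl]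
  have hint : ∀ i : Δ, ∀ a b : ℝ, S ≤ a → b ≤ T → a ≤ b →
      IntervalIntegrable (kloc i) volume a b := by
    intro i a b hA hB hab
    rw [intervalIntegrable_iff_integrableOn_Ioc_of_le hab]
    have hI1 : IntegrableOn (kloc i) (Icc S T) volume := (hklocmem i).integrable hd
    exact hI1.mono_set ((Ioc_subset_Icc_self).trans (Icc_subset_Icc hA hB))
  have hkint : ∀ a b : ℝ, S ≤ a → b ≤ T → a ≤ b → IntervalIntegrable k volume a b := by
    intro a b hA hB hab
    have h9 := IntervalIntegrable.sum I (fun i _ => hint i a b hA hB hab)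
    have h10 : (∑ i ∈ I, kloc i) = k := by
      ext x
      simp [hkdef, Finset.sum_apply]
    rwa [h10] at h9
  obtain ⟨N, hN⟩ := exists_nat_gt ((t - u) / lam)
  have hdivpos : 0 < (t - u) / lam := div_pos (by linarith) hlampos
  have hN0 : 0 < N := Nat.cast_pos.mp (hdivpos.trans hN)
  have hNR : (0:ℝ) < N := Nat.cast_pos.mpr hN0
  set step := (t - u) / N with hstepdef
  have hstep_pos : 0 < step := div_pos (by linarith) hNR
  have hstep_lt : step < lam := by
    rw [hstepdef, div_lt_iff₀ hNR]
    rw [div_lt_iff₀ hlampos] at hN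
    linarith [mul_comm lam (N:ℝ)]
  set ξ : ℕ → ℝ := fun j => u + j * step with hξdef
  have hξ0 : ξ 0 = u := by simp [hξdef]
  have hξN : ξ N = t := by
    simp only [hξdef, hstepdef]
    field_simp
    ring
  have hξadj : ∀ j : ℕ, ξ (j+1) - ξ j = step := by
    intro j; simp only [hξdef]; push_cast; ring
  have hξmem : ∀ j : ℕ, j ≤ N → u ≤ ξ j ∧ ξ j ≤ t := by
    intro j hj
    have hjR : (j:ℝ) ≤ N := Nat.cast_le.mpr hj
    constructor
    · simp only [hξdef]
      nlinarith [hstep_pos, (Nat.cast_nonneg j : (0:ℝ) ≤ (j:ℕ))]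
    · have : ξ j ≤ ξ N := by
        simp only [hξdef]
        have : (j:ℝ) * step ≤ (N:ℝ) * step := by nlinarith
        linarith
      rwa [hξN] at this
  have hptw : ∀ (i : ↥Δ), i ∈ I → ∀ x, kloc i x ≤ k x := fun i hi x =>
    Finset.single_le_sum (fun j _ => hklocnn j x) hi
  have hstepbd : ∀ j : ℕ, j < N →
      ‖φ s (ξ j) z - φ s (ξ (j+1)) z‖ ≤ ∫ x in ξ j..ξ (j+1), k x := by
    intro j hj
    have hjmem := hξmem j hj.le
    have hj1mem := hξmem (j+1) hj
    have hjj1 : ξ j ≤ ξ (j+1) := by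
      have := hξadj j
      linarith
    have hSξj : S ≤ ξ j := hSs.trans (hsu.trans hjmem.1)
    have hξj1T : ξ (j+1) ≤ T := hj1mem.2.trans htT
    have hqΔ : ((s, ξ j) : ℝ × ℝ) ∈ Δ :=
      ⟨hSs, hsu.trans hjmem.1, hjmem.2.trans htT⟩
    obtain ⟨i, hisub⟩ := hlam (s, ξ j) hqΔ
    have hm1 : ((s, ξ j) : ℝ × ℝ) ∈ ball (((i : ↥Δ) : ℝ × ℝ)) (δloc i) :=
      hisub (mem_ball_self hlampos)
    have hm2 : ((s, ξ (j+1)) : ℝ × ℝ) ∈ ball (((i : ↥Δ) : ℝ × ℝ)) (δloc i) := by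
      apply hisub
      rw [mem_ball, Prod.dist_eq, sup_lt_iff]
      refine ⟨by simpa using hlampos, ?_⟩
      rw [Real.dist_eq, show ξ (j+1) - ξ j = step from hξadj j, abs_of_pos hstep_pos]
      exact hstep_lt
    rw [mem_ball, Prod.dist_eq, sup_lt_iff, Real.dist_eq, Real.dist_eq] at hm1 hm2
    have hb1 := hklocbd (i : ↥Δ) s (ξ j) (ξ (j+1)) hSs (hsu.trans hjmem.1) hjj1 hξj1T
      hm1.1 hm1.2 hm2.2
    refine le_trans hb1 ?_
    apply intervalIntegral.integral_mono_on hjj1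
      (hint (i : ↥Δ) (ξ j) (ξ (j+1)) hSξj hξj1T hjj1)
      (hkint (ξ j) (ξ (j+1)) hSξj hξj1T hjj1)
    intro x _
    exact hptw (i : ↥Δ) i.2 x
  calc ‖φ s u z - φ s t z‖
      = ‖∑ j ∈ Finset.range N, (φ s (ξ j) z - φ s (ξ (j+1)) z)‖ := by
        have h9 := Finset.sum_range_sub' (fun j => φ s (ξ j) z) N
        rw [h9, hξ0, hξN]
    _ ≤ ∑ j ∈ Finset.range N, ‖φ s (ξ j) z - φ s (ξ (j+1)) z‖ :=
        norm_sum_le _ _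
    _ ≤ ∑ j ∈ Finset.range N, ∫ x in ξ j..ξ (j+1), k x :=
        Finset.sum_le_sum (fun j hj => hstepbd j (Finset.mem_range.mp hj))
    _ = ∫ x in (ξ 0)..(ξ N), k x := by
        apply intervalIntegral.sum_integral_adjacent_intervals
        intro j hj
        have hjmem := hξmem j hj.le
        have hj1mem := hξmem (j+1) hj
        have hjj1 : ξ j ≤ ξ (j+1) := by
          have := hξadj j
          linarith
        exact hkint (ξ j) (ξ (j+1)) (hSs.trans (hsu.trans hjmem.1))
          (hj1mem.2.trans htT) hjj1
    _ = ∫ x in u..t, k x := by rw [hξ0, hξN]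

end LCEF
end Global

/-- Theorem 1.7: a Loewner chain of order `d` induces, via
`φ_{s,t} := f_t⁻¹ ∘ f_s`, an evolution family of order `d` over the same
canonical domain system. -/
theorem loewnerChain_to_evolutionFamily
    (d : ℝ≥0∞) (hd : 1 ≤ d) (D : CanonicalDomainSystem d) (f : ℝ → ℂ → ℂ)
    (hf : IsLoewnerChain d D f) (φ : ℝ → ℝ → ℂ → ℂ)
    (hφ : ∀ s t : ℝ, 0 ≤ s → s ≤ t → ∀ z ∈ stdAnnulus (D.r s),
      φ s t z ∈ stdAnnulus (D.r t) ∧ f t (φ s t z) = f s z) :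
    IsEvolutionFamily d D φ := by
  refine ⟨?_, ?_, ?_, ?_, ?_⟩
  · intro s t hs hst
    exact LCEF.phi_holo hf hφ hs hst
  · intro s t hs hst w hw
    exact (hφ s t hs hst w hw).1
  · intro s hs z hz
    have h1 := hφ s s hs le_rfl z hz
    exact hf.inj s hs h1.1 hz h1.2
  · intro s u t hs hsu hut z hz
    have h0u : 0 ≤ s := hs
    have h0u' : 0 ≤ u := hs.trans hsu
    have hzu := hφ s u hs hsu z hz
    have h1 := hφ s t hs (hsu.trans hut) z hz
    have h2 := hφ u t h0u' hut (φ s u z) hzu.1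
    exact hf.inj t (h0u'.trans hut) h1.1 h2.1 (by rw [h1.2, h2.2, hzu.2])
  · intro S T hS hST z hz
    exact LCEF.global_est hd hf hφ hS hST hz
end
end

section
/- Let ((D_t),(φ_{s,t})) be an evolution family of order d ∈ [1,+∞], and let (f_t) and (g_t) be two Loewner chains of order d over (D_t), both associated with (φ_{s,t}) (i.e. f_s = f_t∘φ_{s,t} and g_s = g_t∘φ_{s,t} for all 0 ≤ s ≤ t). Then there exists a biholomorphism F from ∪_{t≥0} g_t(D_t) onto ∪_{t≥0} f_t(D_t) such that f_t = F∘g_t for all t ≥ 0. -/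
open MeasureTheory Set Filter Metric
open scoped ENNReal NNReal Topology

noncomputable section

section Aux

lemma isOpen_stdAnnulus (r : ℝ) : IsOpen (stdAnnulus r) := by
  have : stdAnnulus r = (fun z : ℂ => ‖z‖) ⁻¹' Ioo r 1 := by
    ext z; simp [stdAnnulus, and_comm]
  rw [this]
  exact isOpen_Ioo.preimage continuous_norm

/-- Compatibility along the evolution family, one-sided version. -/
lemma assoc_compat_le {d : ℝ≥0∞} {D : CanonicalDomainSystem d} {φ : ℝ → ℝ → ℂ → ℂ}
    (hφ : IsEvolutionFamily d D φ) {f g : ℝ → ℂ → ℂ}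
    (hginj : ∀ t : ℝ, 0 ≤ t → InjOn (g t) (stdAnnulus (D.r t)))
    (hfa : AssociatedLC D f φ) (hga : AssociatedLC D g φ)
    {t₁ t₂ : ℝ} {z₁ z₂ : ℂ} (h1 : 0 ≤ t₁) (h12 : t₁ ≤ t₂)
    (hz₁ : z₁ ∈ stdAnnulus (D.r t₁)) (hz₂ : z₂ ∈ stdAnnulus (D.r t₂))
    (heq : g t₁ z₁ = g t₂ z₂) : f t₁ z₁ = f t₂ z₂ := by
  have hφz : φ t₁ t₂ z₁ ∈ stdAnnulus (D.r t₂) := hφ.mapsTo h1 h12 hz₁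
  have h2 : (0:ℝ) ≤ t₂ := h1.trans h12
  have hzz : z₂ = φ t₁ t₂ z₁ := by
    apply hginj t₂ h2 hz₂ hφz
    rw [← heq, hga t₁ t₂ h1 h12 z₁ hz₁]
  rw [hzz, ← hfa t₁ t₂ h1 h12 z₁ hz₁]

/-- Compatibility along the evolution family. -/
lemma assoc_compat {d : ℝ≥0∞} {D : CanonicalDomainSystem d} {φ : ℝ → ℝ → ℂ → ℂ}
    (hφ : IsEvolutionFamily d D φ) {f g : ℝ → ℂ → ℂ}
    (hginj : ∀ t : ℝ, 0 ≤ t → InjOn (g t) (stdAnnulus (D.r t)))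
    (hfa : AssociatedLC D f φ) (hga : AssociatedLC D g φ)
    {t₁ t₂ : ℝ} {z₁ z₂ : ℂ} (h1 : 0 ≤ t₁) (h2 : 0 ≤ t₂)
    (hz₁ : z₁ ∈ stdAnnulus (D.r t₁)) (hz₂ : z₂ ∈ stdAnnulus (D.r t₂))
    (heq : g t₁ z₁ = g t₂ z₂) : f t₁ z₁ = f t₂ z₂ := by
  rcases le_total t₁ t₂ with h | h
  · exact assoc_compat_le hφ hginj hfa hga h1 h hz₁ hz₂ heq
  · exact (assoc_compat_le hφ hginj hfa hga h2 h hz₂ hz₁ heq.symm).symm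

/-- Local key lemma: if `F ∘ g = f` on an open set `U` with `g` injective
holomorphic and `f` holomorphic, then `F` is holomorphic at each point of `g '' U`. -/
lemma diffAt_of_factor {U : Set ℂ} (hU : IsOpen U) {g f F : ℂ → ℂ}
    (hg : DifferentiableOn ℂ g U) (hinj : InjOn g U) (hf : DifferentiableOn ℂ f U)
    (hFg : ∀ z ∈ U, F (g z) = f z) {z₀ : ℂ} (hz₀ : z₀ ∈ U) :
    DifferentiableAt ℂ F (g z₀) := by
  have hgan : AnalyticOnNhd ℂ g U := hg.analyticOnNhd hU
  -- `g` is nowhere locally constant on `U`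
  have hnotconst : ∀ z ∈ U, ¬ ∀ᶠ w in 𝓝 z, g w = g z := by
    intro z hz hcon
    obtain ⟨ε, hε, hball⟩ := Metric.mem_nhds_iff.mp
      (Filter.inter_mem (hU.mem_nhds hz) hcon)
    have hw : z + (ε/2 : ℝ) ∈ ball z ε := by
      simp [dist_eq_norm, abs_of_pos hε]; linarith
    have h1 := hball hw
    have h2 : z + (ε/2 : ℝ) = z := hinj h1.1 hz h1.2
    have : ((ε/2 : ℝ) : ℂ) = 0 := by linear_combination h2
    simp only [Complex.ofReal_eq_zero] at this
    linarith
  have hmap : ∀ z ∈ U, 𝓝 (g z) ≤ Filter.map g (𝓝 z) := fun z hz =>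
    ((hgan z hz).eventually_constant_or_nhds_le_map_nhds).resolve_left (hnotconst z hz)
  -- continuity of `F` at points of `g '' U`
  have hcont : ∀ z ∈ U, ContinuousAt F (g z) := by
    intro z hz
    have hfc : ContinuousAt f z := (hf.differentiableAt (hU.mem_nhds hz)).continuousAt
    have heq : (fun w => F (g w)) =ᶠ[𝓝 z] f := Filter.eventually_of_mem (hU.mem_nhds hz) hFg
    have : Filter.Tendsto F (𝓝 (g z)) (𝓝 (f z)) := by
      calc Filter.map F (𝓝 (g z)) ≤ Filter.map F (Filter.map g (𝓝 z)) :=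
            Filter.map_mono (hmap z hz)
        _ = Filter.map (fun w => F (g w)) (𝓝 z) := Filter.map_map
        _ = Filter.map f (𝓝 z) := Filter.map_congr heq
        _ ≤ 𝓝 (f z) := hfc
    simpa [ContinuousAt, hFg z hz] using this
  -- differentiability at points with nonzero derivative
  have hC1 : ∀ z ∈ U, deriv g z ≠ 0 → DifferentiableAt ℂ F (g z) := by
    intro z hz hdz
    have hcd : ContDiffAt ℂ 1 g z := (hgan z hz).contDiffAt
    have hstrict : HasStrictDerivAt g (deriv g z) z := hcd.hasStrictDerivAt one_ne_zero
    set hE := hstrict.hasStrictFDerivAt_equiv hdz with hEdef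
    set L : ℂ → ℂ := hE.localInverse _ _ _ with hLdef
    have h1 : ∀ᶠ y in 𝓝 (g z), g (L y) = y := hE.eventually_right_inverse
    have h2 : ∀ᶠ y in 𝓝 (g z), L y ∈ U := hE.localInverse_tendsto (hU.mem_nhds hz)
    have hFeq : F =ᶠ[𝓝 (g z)] fun y => f (L y) :=
      h1.mp (h2.mono fun y hyU hy => by show F y = f (L y); rw [← hFg _ hyU, hy])
    have hLdiff : DifferentiableAt ℂ L (g z) := hE.to_localInverse.differentiableAt
    have hLim : L (g z) = z := hE.localInverse_apply_image
    have hcomp : DifferentiableAt ℂ (fun y => f (L y)) (g z) := by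
      refine DifferentiableAt.comp _ ?_ hLdiff
      rw [hLim]; exact hf.differentiableAt (hU.mem_nhds hz)
    exact hFeq.differentiableAt_iff.mpr hcomp
  by_cases hdz : deriv g z₀ ≠ 0
  · exact hC1 z₀ hz₀ hdz
  push_neg at hdz
  have hderivan : AnalyticAt ℂ (deriv g) z₀ := hgan.deriv z₀ hz₀
  rcases hderivan.eventually_eq_zero_or_eventually_ne_zero with hev | hev
  · -- `deriv g` vanishes near `z₀`: contradiction with injectivity
    exfalso
    obtain ⟨ε, hε, hball⟩ := Metric.mem_nhds_iff.mp
      (Filter.inter_mem (hU.mem_nhds hz₀) hev)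
    have hballU : ball z₀ ε ⊆ U := fun x hx => (hball hx).1
    have hconst : g (z₀ + (ε/2 : ℝ)) = g z₀ := by
      refine (convex_ball z₀ ε).is_const_of_fderivWithin_eq_zero
        (hg.mono hballU) (fun x hx => ?_) ?_ (mem_ball_self hε)
      · have hx0 : deriv g x = 0 := (hball hx).2
        have := (hg.differentiableAt (hU.mem_nhds (hballU hx)))
        rw [fderivWithin_of_isOpen isOpen_ball hx]
        ext
        simp [← toSpanSingleton_deriv, hx0]
      · simp [dist_eq_norm, abs_of_pos hε]; linarith
    have h2 : z₀ + (ε/2 : ℝ) = z₀ :=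
      hinj (hballU (by simp [dist_eq_norm, abs_of_pos hε]; linarith)) hz₀ hconst
    have : ((ε/2 : ℝ) : ℂ) = 0 := by linear_combination h2
    simp only [Complex.ofReal_eq_zero] at this
    linarith
  · -- `deriv g ≠ 0` on a punctured neighborhood of `z₀`
    rw [eventually_nhdsWithin_iff] at hev
    obtain ⟨ε, hε, hball⟩ := Metric.mem_nhds_iff.mp
      (Filter.inter_mem (hU.mem_nhds hz₀) hev)
    have hballU : ball z₀ ε ⊆ U := fun x hx => (hball hx).1
    have hV : g '' ball z₀ ε ∈ 𝓝 (g z₀) :=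
      hmap z₀ hz₀ (Filter.image_mem_map (ball_mem_nhds z₀ hε))
    have hdiff : ∀ᶠ w in 𝓝[≠] (g z₀), DifferentiableAt ℂ F w := by
      rw [eventually_nhdsWithin_iff]
      filter_upwards [hV] with w hw hwne
      obtain ⟨x, hx, rfl⟩ := hw
      have hxz : x ≠ z₀ := by rintro rfl; exact hwne rfl
      exact hC1 x (hballU hx) ((hball hx).2 hxz)
    exact (Complex.analyticAt_of_differentiable_on_punctured_nhds_of_continuousAt
      hdiff (hcont z₀ hz₀)).differentiableAt

end Aux

/-- Theorem 1.8 (uniqueness part): two Loewner chains associated with the same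
evolution family differ by a biholomorphism of their Loewner ranges. -/
theorem loewnerChain_uniqueness
    (d : ℝ≥0∞) (hd : 1 ≤ d) (D : CanonicalDomainSystem d) (φ : ℝ → ℝ → ℂ → ℂ)
    (hφ : IsEvolutionFamily d D φ) (f g : ℝ → ℂ → ℂ)
    (hf : IsLoewnerChain d D f) (hg : IsLoewnerChain d D g)
    (hfa : AssociatedLC D f φ) (hga : AssociatedLC D g φ) :
    ∃ F : ℂ → ℂ, DifferentiableOn ℂ F (chainUnion D g) ∧
      BijOn F (chainUnion D g) (chainUnion D f) ∧
      ∀ t : ℝ, 0 ≤ t → ∀ z ∈ stdAnnulus (D.r t), f t z = F (g t z) := by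
  classical
  -- definition of `F` by choice
  set P : ℂ → ℝ × ℂ → Prop := fun w p =>
    0 ≤ p.1 ∧ p.2 ∈ stdAnnulus (D.r p.1) ∧ g p.1 p.2 = w with hP
  set F : ℂ → ℂ := fun w =>
    if h : ∃ p : ℝ × ℂ, P w p then f h.choose.1 h.choose.2 else w with hFdef
  have hmem : ∀ {w : ℂ}, w ∈ chainUnion D g ↔ ∃ p : ℝ × ℂ, P w p := by
    intro w
    simp only [chainUnion, mem_iUnion, mem_image, mem_Ici, hP]
    constructor
    · rintro ⟨t, ht, z, hz, hw⟩; exact ⟨(t, z), ht, hz, hw⟩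
    · rintro ⟨⟨t, z⟩, ht, hz, hw⟩; exact ⟨t, ht, z, hz, hw⟩
  -- `F (g t z) = f t z`
  have hF : ∀ t : ℝ, 0 ≤ t → ∀ z ∈ stdAnnulus (D.r t), F (g t z) = f t z := by
    intro t ht z hz
    have hex : ∃ p : ℝ × ℂ, P (g t z) p := ⟨(t, z), ht, hz, rfl⟩
    have hspec := hex.choose_spec
    simp only [hFdef, dif_pos hex]
    exact assoc_compat hφ (fun s hs => hg.inj s hs) hfa hga hspec.1 ht hspec.2.1 hz hspec.2.2
  refine ⟨F, ?_, ⟨?_, ?_, ?_⟩, fun t ht z hz => (hF t ht z hz).symm⟩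
  · -- differentiability
    intro w hw
    obtain ⟨⟨t, z⟩, ht, hz, rfl⟩ := hmem.mp hw
    exact (diffAt_of_factor (isOpen_stdAnnulus _) (hg.holo t ht) (hg.inj t ht)
      (hf.holo t ht) (hF t ht) hz).differentiableWithinAt
  · -- MapsTo
    intro w hw
    obtain ⟨⟨t, z⟩, ht, hz, rfl⟩ := hmem.mp hw
    rw [hF t ht z hz]
    exact mem_biUnion ht ⟨z, hz, rfl⟩
  · -- InjOn
    intro w₁ hw₁ w₂ hw₂ hFw
    obtain ⟨⟨t₁, z₁⟩, ht₁, hz₁, rfl⟩ := hmem.mp hw₁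
    obtain ⟨⟨t₂, z₂⟩, ht₂, hz₂, rfl⟩ := hmem.mp hw₂
    rw [hF t₁ ht₁ z₁ hz₁, hF t₂ ht₂ z₂ hz₂] at hFw
    exact assoc_compat hφ (fun s hs => hf.inj s hs) hga hfa ht₁ ht₂ hz₁ hz₂ hFw
  · -- SurjOn
    intro w hw
    simp only [chainUnion, mem_iUnion, mem_image, mem_Ici] at hw
    obtain ⟨t, ht, z, hz, rfl⟩ := hw
    exact ⟨g t z, mem_biUnion ht ⟨z, hz, rfl⟩, hF t ht z hz⟩
end
end

section
/- Let (D_t) = (𝔸_{r(t)}) be a canonical domain system and (f_t) a Loewner chain over (D_t). Then for every compact set K ⊂ 𝒟 := {(z,t) : t ≥ 0, z ∈ D_t} there exists M = M(K) > 0 such that |ζ − z| ≤ M·|f_t(ζ) − f_t(z)| whenever (z,t) ∈ K and (ζ,t) ∈ K. -/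
open MeasureTheory Set Filter Metric
open scoped ENNReal NNReal Topology

noncomputable section

lemma small_int {g : ℝ → ℝ} {S T t₀ : ℝ} (hST : S ≤ T) (hg : IntegrableOn g (Icc S T) volume)
    (ht₀ : t₀ ∈ Icc S T) {ε : ℝ} (hε : 0 < ε) :
    ∃ δ > 0, ∀ s u : ℝ, S ≤ s → s ≤ u → u ≤ T → |s - t₀| ≤ δ → |u - t₀| ≤ δ →
      |∫ ξ in s..u, g ξ| ≤ ε := by
  set P : ℝ → ℝ := fun x => ∫ ξ in S..x, g ξ with hPdef
  have hg' : IntegrableOn g (uIcc S T) volume := by rwa [uIcc_of_le hST]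
  have hP : ContinuousOn P (Icc S T) := by
    have := intervalIntegral.continuousOn_primitive_interval (a := S) (b := T) (μ := volume) hg'
    rwa [uIcc_of_le hST] at this
  have cw := hP t₀ ht₀
  rw [Metric.continuousWithinAt_iff] at cw
  obtain ⟨δ, hδ, hδ'⟩ := cw (ε/2) (by positivity)
  refine ⟨δ/2, by positivity, fun s u hSs hsu huT hs ht => ?_⟩
  have hsT : s ≤ T := hsu.trans huT
  have hSu : S ≤ u := hSs.trans hsu
  have hint : ∀ a b : ℝ, S ≤ a → a ≤ b → b ≤ T → IntervalIntegrable g volume a b := by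
    intro a b ha hab hbT
    exact (hg.mono_set (by rw [uIcc_of_le hab]; exact Icc_subset_Icc ha hbT)).intervalIntegrable
  have key : P s + ∫ ξ in s..u, g ξ = P u :=
    intervalIntegral.integral_add_adjacent_intervals (hint S s le_rfl hSs hsT)
      (hint s u hSs hsu huT)
  have e1 : |P s - P t₀| < ε/2 := by
    have := hδ' ⟨hSs, hsT⟩ (lt_of_le_of_lt hs (by linarith))
    rwa [Real.dist_eq] at this
  have e2 : |P u - P t₀| < ε/2 := by
    have := hδ' ⟨hSu, huT⟩ (lt_of_le_of_lt ht (by linarith))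
    rwa [Real.dist_eq] at this
  rw [show (∫ ξ in s..u, g ξ) = P u - P s by linarith]
  calc |P u - P s| ≤ |P u - P t₀| + |P t₀ - P s| := abs_sub_le _ _ _
    _ ≤ ε := by rw [abs_sub_comm (P t₀)]; linarith

lemma omegaFun_pos {b : ℝ} (hb0 : 0 < b) (h1 : b < 1) : 0 < omegaFun b := by
  have hlogb : Real.log b < 0 := Real.log_neg hb0 h1
  unfold omegaFun
  rw [if_neg hb0.ne']
  rw [div_pos_iff]
  right
  constructor <;> nlinarith [Real.pi_pos]

lemma omegaFun_lt {a b : ℝ} (h0 : 0 ≤ a) (hab : a < b) (h1 : b < 1) :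
    omegaFun a < omegaFun b := by
  have hb0 : 0 < b := lt_of_le_of_lt h0 hab
  have hlogb : Real.log b < 0 := Real.log_neg hb0 h1
  rcases eq_or_lt_of_le h0 with h | ha0
  · rw [show omegaFun a = 0 by rw [← h, omegaFun, if_pos rfl]]
    exact omegaFun_pos hb0 h1
  · have hloga : Real.log a < Real.log b := Real.log_lt_log ha0 hab
    have hla : Real.log a < 0 := hloga.trans hlogb
    unfold omegaFun
    rw [if_neg ha0.ne', if_neg hb0.ne']
    rw [show -Real.pi / Real.log a = Real.pi / (-Real.log a) by rw [neg_div, div_neg],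
        show -Real.pi / Real.log b = Real.pi / (-Real.log b) by rw [neg_div, div_neg]]
    exact div_lt_div_of_pos_left Real.pi_pos (by linarith) (by linarith)

lemma CanonicalDomainSystem.r_antitone {d : ℝ≥0∞} (D : CanonicalDomainSystem d)
    {s t : ℝ} (hs : 0 ≤ s) (hst : s ≤ t) : D.r t ≤ D.r s := by
  by_contra h
  push_neg at h
  exact absurd (D.omega_anti hs hst)
    (not_le.mpr (omegaFun_lt (D.r_nonneg s hs) h (D.r_lt_one t (hs.trans hst))))

lemma omegaFun_le {a b : ℝ} (h0 : 0 ≤ a) (hab : a ≤ b) (h1 : b < 1) :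
    omegaFun a ≤ omegaFun b := by
  rcases eq_or_lt_of_le hab with h | h
  · rw [h]
  · exact (omegaFun_lt h0 h h1).le

lemma CanonicalDomainSystem.r_left_cont {d : ℝ≥0∞} (hd : 1 ≤ d) (D : CanonicalDomainSystem d)
    {t₀ ε : ℝ} (ht₀ : 0 ≤ t₀) (hε : 0 < ε) :
    ∃ δ > 0, ∀ s : ℝ, 0 ≤ s → s ≤ t₀ → t₀ - s ≤ δ → D.r s < D.r t₀ + ε := by
  by_cases hcase : D.r t₀ + ε < 1
  swap
  · exact ⟨1, one_pos, fun s hs0 hst _ =>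
      lt_of_lt_of_le (D.r_lt_one s hs0) (not_lt.mp hcase)⟩
  have hη : 0 < omegaFun (D.r t₀ + ε) - omegaFun (D.r t₀) :=
    sub_pos.mpr (omegaFun_lt (D.r_nonneg t₀ ht₀) (lt_add_of_pos_right _ hε) hcase)
  obtain ⟨g, hg1, hg2⟩ := D.omega_ACd
  have hgi : IntegrableOn g (Icc 0 (t₀ + 1)) volume := by
    haveI : IsFiniteMeasure (volume.restrict (Icc (0:ℝ) (t₀+1))) :=
      ⟨by rw [Measure.restrict_apply_univ]; exact measure_Icc_lt_top⟩
    exact memLp_one_iff_integrable.mp ((hg1 (t₀+1) (by linarith)).mono_exponent hd)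
  obtain ⟨δ, hδ, hδ'⟩ := small_int (by linarith : (0:ℝ) ≤ t₀ + 1) hgi
    (⟨ht₀, by linarith⟩ : t₀ ∈ Icc (0:ℝ) (t₀+1)) (half_pos hη)
  refine ⟨δ, hδ, fun s hs0 hst hts => ?_⟩
  by_contra hcon
  push_neg at hcon
  have h1 : |∫ ξ in s..t₀, g ξ| ≤ (omegaFun (D.r t₀ + ε) - omegaFun (D.r t₀)) / 2 :=
    hδ' s t₀ hs0 hst (by linarith) (by rw [abs_sub_comm, abs_of_nonneg (by linarith)]; linarith)
      (by simp [hδ.le])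
  have h2 : omegaFun (D.r t₀) - omegaFun (D.r s) = ∫ ξ in s..t₀, g ξ := hg2 s t₀ hs0 hst
  have h3 : omegaFun (D.r t₀ + ε) ≤ omegaFun (D.r s) :=
    omegaFun_le (by linarith [D.r_nonneg t₀ ht₀]) hcon (D.r_lt_one s hs0)
  have h4 := abs_le.mp h1
  linarith [h4.1, h4.2]

lemma local_ball {d : ℝ≥0∞} (hd : 1 ≤ d) (D : CanonicalDomainSystem d) {z₀ : ℂ} {t₀ : ℝ}
    (h : (z₀, t₀) ∈ vfDomain D) :
    ∃ ρ > 0, ∃ δ > 0, ∀ s : ℝ, 0 ≤ s → |s - t₀| ≤ δ →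
      closedBall z₀ (3 * ρ) ⊆ stdAnnulus (D.r s) := by
  obtain ⟨ht₀, hz₁, hz₂⟩ := h
  set a := ‖z₀‖ with ha
  have hr0 : 0 ≤ D.r t₀ := D.r_nonneg t₀ ht₀
  set ρ := min ((a - D.r t₀)/4) ((1 - a)/4) with hρdef
  have hρ : 0 < ρ := lt_min (by linarith) (by linarith)
  have hρ1 : 3 * ρ < a - D.r t₀ := by
    have := min_le_left ((a - D.r t₀)/4) ((1 - a)/4); simp only [← hρdef] at this; linarith
  have hρ2 : a + 3 * ρ < 1 := by
    have := min_le_right ((a - D.r t₀)/4) ((1 - a)/4); simp only [← hρdef] at this; linarith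
  have hε : 0 < a - 3 * ρ - D.r t₀ := by linarith
  obtain ⟨δ, hδ, hδ'⟩ := D.r_left_cont hd ht₀ hε
  refine ⟨ρ, hρ, δ, hδ, fun s hs0 hst w hw => ?_⟩
  have hrs : D.r s < a - 3 * ρ := by
    rcases le_total s t₀ with hle | hle
    · have := hδ' s hs0 hle (by rw [abs_sub_comm, abs_of_nonneg (by linarith)] at hst; linarith)
      linarith
    · have := D.r_antitone ht₀ hle
      linarith
  have hw' : ‖w - z₀‖ ≤ 3 * ρ := by rwa [mem_closedBall, dist_eq_norm] at hw
  have hwz : ‖z₀‖ - ‖w - z₀‖ ≤ ‖w‖ := by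
    have h1 := norm_sub_norm_le z₀ w
    have h2 : ‖z₀ - w‖ = ‖w - z₀‖ := norm_sub_rev _ _
    linarith
  have hwz2 : ‖w‖ ≤ ‖z₀‖ + ‖w - z₀‖ := norm_le_insert' w z₀
  have hna : ‖z₀‖ = a := by rw [ha]
  constructor
  · linarith
  · linarith

lemma memLp_integrableOn {d : ℝ≥0∞} (hd : 1 ≤ d) {S T : ℝ} {g : ℝ → ℝ}
    (hg : MemLp g d (volume.restrict (Icc S T))) : IntegrableOn g (Icc S T) volume := by
  haveI : IsFiniteMeasure (volume.restrict (Icc S T)) :=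
    ⟨by rw [Measure.restrict_apply_univ]; exact measure_Icc_lt_top⟩
  exact memLp_one_iff_integrable.mp (hg.mono_exponent hd)

lemma unif_ctrl {d : ℝ≥0∞} (hd : 1 ≤ d) (D : CanonicalDomainSystem d) {f : ℝ → ℂ → ℂ}
    (hf : IsLoewnerChain d D f) {z₀ : ℂ} {t₀ : ℝ} (h : (z₀, t₀) ∈ vfDomain D) :
    ∃ ρ > 0, ∃ δ > 0,
      (∀ s : ℝ, 0 ≤ s → |s - t₀| ≤ δ → closedBall z₀ (3 * ρ) ⊆ stdAnnulus (D.r s)) ∧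
      ∀ ε : ℝ, 0 < ε → ∃ δ' > 0, δ' ≤ δ ∧ ∀ s : ℝ, 0 ≤ s → |s - t₀| ≤ δ' →
        ∀ w ∈ closedBall z₀ (3 * ρ), ‖f s w - f t₀ w‖ ≤ ε := by
  obtain ⟨ρ, hρ, δ, hδ, hball⟩ := local_ball hd D h
  have ht₀ : 0 ≤ t₀ := h.1
  set S := max (t₀ - δ) 0 with hSdef
  set T := t₀ + δ with hTdef
  have hS0 : 0 ≤ S := le_max_right _ _
  have hSt₀ : S ≤ t₀ := max_le (by linarith) ht₀
  have ht₀T : t₀ ≤ T := by rw [hTdef]; linarith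
  have hST : S ≤ T := hSt₀.trans ht₀T
  have hSd : |S - t₀| ≤ δ := by
    rw [abs_sub_comm, abs_of_nonneg (by linarith)]
    have := le_max_left (t₀ - δ) (0:ℝ)
    linarith
  have hKsub : closedBall z₀ (3*ρ) ⊆ stdAnnulus (D.r S) := hball S hS0 hSd
  obtain ⟨k, hk0, hkLp, hkest⟩ := hf.lc3 S T hS0 hST _ (isCompact_closedBall _ _) hKsub
  have hki : IntegrableOn k (Icc S T) volume := memLp_integrableOn hd hkLp
  refine ⟨ρ, hρ, δ, hδ, hball, fun ε hε => ?_⟩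
  obtain ⟨δ₂, hδ₂, hδ₂'⟩ := small_int hST hki ⟨hSt₀, ht₀T⟩ hε
  refine ⟨min δ δ₂, lt_min hδ hδ₂, min_le_left _ _, fun s hs0 hs w hw => ?_⟩
  have hsδ : |s - t₀| ≤ δ := hs.trans (min_le_left _ _)
  have hsδ₂ : |s - t₀| ≤ δ₂ := hs.trans (min_le_right _ _)
  have habs := abs_le.mp hsδ
  have hsS : S ≤ s := max_le (by linarith) hs0
  have hsT : s ≤ T := by rw [hTdef]; linarith
  have ht₀abs : |t₀ - t₀| ≤ δ₂ := by simp [hδ₂.le]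
  rcases le_total s t₀ with hle | hle
  · have h1 := hkest w hw s t₀ hsS hle ht₀T
    have h2 : |∫ ξ in s..t₀, k ξ| ≤ ε := hδ₂' s t₀ hsS hle ht₀T hsδ₂ ht₀abs
    exact h1.trans ((le_abs_self _).trans h2)
  · have h1 := hkest w hw t₀ s hSt₀ hle hsT
    have h2 : |∫ ξ in t₀..s, k ξ| ≤ ε := hδ₂' t₀ s hSt₀ hle hsT ht₀abs hsδ₂
    rw [norm_sub_rev]
    exact h1.trans ((le_abs_self _).trans h2)

lemma deriv_ne_zero_of_injOn {U : Set ℂ} (hU : IsOpen U) {f : ℂ → ℂ}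
    (hdf : DifferentiableOn ℂ f U) (hi : InjOn f U) {a : ℂ} (ha : a ∈ U) :
    deriv f a ≠ 0 := by
  intro hfa
  obtain ⟨ε₀, hε₀, hball⟩ := Metric.isOpen_iff.mp hU a ha
  have hfan : AnalyticAt ℂ f a := hdf.analyticAt (hU.mem_nhds ha)
  have hg : AnalyticAt ℂ (fun z => f z - f a) a := hfan.sub analyticAt_const
  have hne : ¬ (∀ᶠ z in 𝓝 a, f z - f a = 0) := by
    intro hev
    obtain ⟨ε₁, hε₁, h1⟩ := Metric.eventually_nhds_iff.mp hev
    set z : ℂ := a + ((min ε₁ ε₀ / 2 : ℝ) : ℂ) with hzdef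
    have hmin : 0 < min ε₁ ε₀ := lt_min hε₁ hε₀
    have hdz : dist z a = min ε₁ ε₀ / 2 := by
      rw [hzdef, dist_eq_norm]
      simp
      exact ⟨hε₁.le, hε₀.le⟩
    have hzne : z ≠ a := by
      intro hcon
      rw [hcon, dist_self] at hdz
      linarith
    have hz1 : f z = f a :=
      sub_eq_zero.mp (h1 (by rw [hdz]; linarith [min_le_left ε₁ ε₀]))
    exact hzne (hi (hball (by rw [mem_ball, hdz]; linarith [min_le_right ε₁ ε₀])) ha hz1)
  have horder : analyticOrderAt (fun z => f z - f a) a ≠ ⊤ := fun hc => hne (analyticOrderAt_eq_top.mp hc)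
  obtain ⟨n, hn⟩ : ∃ n : ℕ, analyticOrderAt (fun z => f z - f a) a = (n : ℕ∞) := by
    obtain ⟨n, hn⟩ := WithTop.ne_top_iff_exists.mp horder
    exact ⟨n, hn.symm⟩
  obtain ⟨h, hh, hha, hev⟩ := hg.analyticOrderAt_eq_natCast.mp hn
  have heva := hev.self_of_nhds
  have hn0 : n ≠ 0 := by
    intro h0
    rw [h0] at heva
    simp at heva
    exact hha heva.symm
  have hn1 : n ≠ 1 := by
    intro h1
    have hD : HasDerivAt (fun z => (z - a) ^ n • h z) (h a) a := by
      rw [h1]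
      have hd1 : HasDerivAt (fun z : ℂ => z - a) 1 a := (hasDerivAt_id a).sub_const a
      have hd2 : HasDerivAt h (deriv h a) a := hh.differentiableAt.hasDerivAt
      have := hd1.mul hd2
      simp only [pow_one, smul_eq_mul]
      simp only [one_mul, sub_self, zero_mul, add_zero] at this
      exact this
    have hder : deriv (fun z => f z - f a) a = h a := by
      rw [Filter.EventuallyEq.deriv_eq hev]
      exact hD.deriv
    rw [deriv_sub_const, hfa] at hder
    exact hha hder.symm
  have hn2 : 2 ≤ n := by omega
  have hnC : (n : ℂ) ≠ 0 := Nat.cast_ne_zero.mpr hn0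
  set c := h a with hcdef
  set L : ℂ → ℂ := fun z => Complex.log (h z / c) with hLdef
  have hL : AnalyticAt ℂ L a := by
    have hdiv : AnalyticAt ℂ (fun z => h z / c) a := hh.div analyticAt_const hha
    have h1mem : h a / c ∈ Complex.slitPlane := by
      rw [hcdef, div_self hha]; exact Complex.one_mem_slitPlane
    have hcomp : AnalyticAt ℂ (Complex.log ∘ fun z => h z / c) a :=
      AnalyticAt.comp (f := fun z => h z / c) (x := a) (analyticAt_clog h1mem) hdiv
    exact hcomp
  set b := Complex.exp (Complex.log c / n) with hbdef
  have hb : b ≠ 0 := Complex.exp_ne_zero _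
  have hbn : b ^ n = c := by
    rw [hbdef, ← Complex.exp_nat_mul, mul_div_cancel₀ _ hnC, Complex.exp_log hha]
  set q : ℂ → ℂ := fun z => b * Complex.exp (L z / n) with hqdef
  have hq : AnalyticAt ℂ q a := analyticAt_const.mul ((hL.div analyticAt_const hnC).cexp)
  have hqne : ∀ z, q z ≠ 0 := fun z => mul_ne_zero hb (Complex.exp_ne_zero _)
  set root : ℂ → ℂ := fun z => (z - a) * q z with hrootdef
  have hroot : AnalyticAt ℂ root a := ((analyticAt_id).sub analyticAt_const).mul hq
  have hroota : root a = 0 := by simp [hrootdef]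
  have hhne : ∀ᶠ z in 𝓝 a, h z ≠ 0 := hh.continuousAt.eventually_ne hha
  have hrootn : ∀ᶠ z in 𝓝 a, root z ^ n = f z - f a := by
    filter_upwards [hev, hhne] with z h1 h2
    have hexp : Complex.exp (L z / n) ^ n = h z / c := by
      rw [← Complex.exp_nat_mul, mul_div_cancel₀ _ hnC, hLdef,
        Complex.exp_log (div_ne_zero h2 hha)]
    calc root z ^ n = (z - a) ^ n * (b * Complex.exp (L z / n)) ^ n := by
          rw [hrootdef, mul_pow]
      _ = (z - a) ^ n * (b ^ n * Complex.exp (L z / n) ^ n) := by rw [mul_pow]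
      _ = (z - a) ^ n * h z := by rw [hexp, hbn, mul_comm c, div_mul_cancel₀ (h z) hha]
      _ = f z - f a := by rw [h1, smul_eq_mul]
  rcases hroot.eventually_constant_or_nhds_le_map_nhds with hconst | hmap
  · have hev2 : ∀ᶠ z in 𝓝[≠] a, root z = 0 := by
      filter_upwards [hconst.filter_mono (nhdsWithin_le_nhds (s := {a}ᶜ))] with z hz
      rw [hz, hroota]
    obtain ⟨z, hz1, hz2⟩ := (hev2.and eventually_mem_nhdsWithin).exists
    rw [hrootdef] at hz1
    simp only at hz1
    rcases mul_eq_zero.mp hz1 with h' | h'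
    · exact hz2 (by rw [sub_eq_zero.mp h']; exact mem_singleton a)
    · exact hqne z h'
  · rw [hroota] at hmap
    obtain ⟨ε₁, hε₁, h1⟩ := Metric.eventually_nhds_iff.mp hrootn
    set ε' := min ε₁ ε₀ with hε'def
    have hε' : 0 < ε' := lt_min hε₁ hε₀
    have himg : root '' ball a ε' ∈ 𝓝 (0:ℂ) := hmap (image_mem_map (ball_mem_nhds a hε'))
    obtain ⟨ε₂, hε₂, hball₂⟩ := Metric.mem_nhds_iff.mp himg
    set θ : ℝ := 2 * Real.pi / n with hθdef
    have hnpos : (0:ℝ) < n := by exact_mod_cast Nat.pos_of_ne_zero hn0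
    have hθpos : 0 < θ := div_pos (by positivity) hnpos
    have hθlt : θ < 2 * Real.pi := by
      rw [hθdef, div_lt_iff₀ hnpos]
      have h2n : (2:ℝ) ≤ (n:ℝ) := by exact_mod_cast hn2
      nlinarith [Real.pi_pos, mul_le_mul_of_nonneg_left h2n (by positivity : (0:ℝ) ≤ 2*Real.pi)]
    set w : ℂ := ((ε₂/2 : ℝ) : ℂ) with hwdef
    set u : ℂ := Complex.exp (θ * Complex.I) with hudef
    have hwabs : ‖w‖ = ε₂ / 2 := by
      rw [hwdef, Complex.norm_real, Real.norm_eq_abs, abs_of_nonneg (by linarith)]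
    have huabs : ‖u‖ = 1 := Complex.norm_exp_ofReal_mul_I θ
    have hw0 : w ≠ 0 := by
      intro hc
      rw [hc] at hwabs
      simp at hwabs
      linarith
    have hwmem : w ∈ ball (0:ℂ) ε₂ := by
      rw [mem_ball, Complex.dist_eq, sub_zero, hwabs]; linarith
    have hw'mem : w * u ∈ ball (0:ℂ) ε₂ := by
      rw [mem_ball, Complex.dist_eq, sub_zero, norm_mul, hwabs, huabs, mul_one]; linarith
    obtain ⟨z₁, hz₁b, hz₁⟩ := hball₂ hwmem
    obtain ⟨z₂, hz₂b, hz₂⟩ := hball₂ hw'mem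
    have hune : u ≠ 1 := by
      intro hc
      obtain ⟨m, hm⟩ := Complex.exp_eq_one_iff.mp (hudef ▸ hc)
      have h2 : (θ : ℂ) * Complex.I = ((m * (2 * Real.pi) : ℝ) : ℂ) * Complex.I := by
        rw [hm]; push_cast; ring
      have h3 : (θ : ℝ) = m * (2 * Real.pi) := by
        exact_mod_cast mul_right_cancel₀ Complex.I_ne_zero h2
      rcases le_or_gt (m : ℝ) 0 with hm0 | hm0
      · nlinarith [Real.pi_pos]
      · have : (1:ℝ) ≤ m := by exact_mod_cast hm0
        nlinarith [Real.pi_pos]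
    have hun : u ^ n = 1 := by
      rw [hudef, ← Complex.exp_nat_mul]
      have harg : (n : ℂ) * ((θ:ℝ) * Complex.I) = 2 * Real.pi * Complex.I := by
        rw [hθdef]
        push_cast
        field_simp
      rw [harg, Complex.exp_two_pi_mul_I]
    have hfz : f z₁ = f z₂ := by
      have e1 : root z₁ ^ n = f z₁ - f a :=
        h1 ((mem_ball.mp hz₁b).trans_le (min_le_left _ _))
      have e2 : root z₂ ^ n = f z₂ - f a :=
        h1 ((mem_ball.mp hz₂b).trans_le (min_le_left _ _))
      have : f z₁ - f a = f z₂ - f a := by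
        rw [← e1, ← e2, hz₁, hz₂, mul_pow, hun, mul_one]
      exact sub_left_inj.mp this
    have hz₁U : z₁ ∈ U := hball (ball_subset_ball (min_le_right _ _) hz₁b)
    have hz₂U : z₂ ∈ U := hball (ball_subset_ball (min_le_right _ _) hz₂b)
    have heq : z₁ = z₂ := hi hz₁U hz₂U hfz
    rw [heq, hz₂] at hz₁
    exact hune (mul_left_cancel₀ hw0 (hz₁.trans (mul_one w).symm))

lemma near_diag {d : ℝ≥0∞} (hd : 1 ≤ d) (D : CanonicalDomainSystem d) {f : ℝ → ℂ → ℂ}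
    (hf : IsLoewnerChain d D f) {z₀ : ℂ} {t₀ : ℝ} (h : (z₀, t₀) ∈ vfDomain D) :
    ∃ ρ > 0, ∃ δ > 0, ∃ c > 0, ∀ s : ℝ, 0 ≤ s → |s - t₀| ≤ δ →
      ∀ z ∈ closedBall z₀ ρ, ∀ ζ ∈ closedBall z₀ ρ,
        c * ‖ζ - z‖ ≤ ‖f s ζ - f s z‖ := by
  obtain ⟨ρ, hρ, δ, hδ, hball, hctrl⟩ := unif_ctrl hd D hf h
  have ht₀ : 0 ≤ t₀ := h.1
  have hA : closedBall z₀ (3*ρ) ⊆ stdAnnulus (D.r t₀) := hball t₀ ht₀ (by simp [hδ.le])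
  have hdiff : DifferentiableOn ℂ (f t₀) (stdAnnulus (D.r t₀)) := hf.holo t₀ ht₀
  have hopen := isOpen_stdAnnulus (D.r t₀)
  have hz₀A : z₀ ∈ stdAnnulus (D.r t₀) := hA (mem_closedBall_self (by positivity))
  set c₀ := deriv (f t₀) z₀ with hc₀def
  have hc₀ : c₀ ≠ 0 := deriv_ne_zero_of_injOn hopen hdiff (hf.inj t₀ ht₀) hz₀A
  set cc := ‖c₀‖ with hccdef
  have hcc : 0 < cc := by
    rw [hccdef]
    exact norm_pos_iff.mpr hc₀
  have hderivcont : ContinuousAt (deriv (f t₀)) z₀ :=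
    ((hdiff.analyticOnNhd hopen).deriv.continuousOn).continuousAt (hopen.mem_nhds hz₀A)
  obtain ⟨ρ₂, hρ₂, hρ₂'⟩ := Metric.continuousAt_iff.mp hderivcont (cc/4) (by positivity)
  set ρ₁ := min ρ (ρ₂/2) with hρ₁def
  have hρ₁ : 0 < ρ₁ := lt_min hρ (by positivity)
  have hρ₁ρ : ρ₁ ≤ ρ := min_le_left _ _
  have hderb : ∀ u ∈ closedBall z₀ ρ₁, ‖deriv (f t₀) u - c₀‖ ≤ cc/4 := by
    intro u hu
    rw [mem_closedBall] at hu
    have : dist u z₀ < ρ₂ := by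
      have := min_le_right ρ (ρ₂/2)
      have h2 : ρ₁ ≤ ρ₂/2 := this
      linarith [hu.trans h2]
    have := (hρ₂' this).le
    rwa [Complex.dist_eq] at this
  obtain ⟨δ', hδ'pos, hδ'le, hctrl'⟩ := hctrl ((cc/4) * ρ) (by positivity)
  refine ⟨ρ₁, hρ₁, δ', hδ'pos, cc/2, by positivity, fun s hs0 hs z hz ζ hζ => ?_⟩
  have hsδ : |s - t₀| ≤ δ := hs.trans hδ'le
  have hAs : closedBall z₀ (3*ρ) ⊆ stdAnnulus (D.r s) := hball s hs0 hsδ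
  have hfsd : DifferentiableOn ℂ (f s) (stdAnnulus (D.r s)) := hf.holo s hs0
  -- uniform closeness
  have hclose : ∀ w ∈ closedBall z₀ (3*ρ), ‖f s w - f t₀ w‖ ≤ (cc/4) * ρ :=
    hctrl' s hs0 hs
  -- derivative bound
  have key : ∀ u ∈ closedBall z₀ ρ₁, ‖deriv (f s) u - c₀‖ ≤ cc/2 := by
    intro u hu
    rw [mem_closedBall] at hu
    have hsub : closedBall u ρ ⊆ ball z₀ (3*ρ) := by
      intro w hw
      rw [mem_closedBall] at hw
      rw [mem_ball]
      calc dist w z₀ ≤ dist w u + dist u z₀ := dist_triangle _ _ _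
        _ ≤ ρ + ρ₁ := add_le_add hw hu
        _ < 3 * ρ := by linarith [hρ₁ρ, hρ]
    have hball3 : ball z₀ (3*ρ) ⊆ closedBall z₀ (3*ρ) := ball_subset_closedBall
    have hfsU : DifferentiableOn ℂ (f s) (ball z₀ (3*ρ)) := hfsd.mono (hball3.trans hAs)
    have hftU : DifferentiableOn ℂ (f t₀) (ball z₀ (3*ρ)) := hdiff.mono (hball3.trans hA)
    have e1 : Complex.cderiv ρ (f s) u = deriv (f s) u :=
      Complex.cderiv_eq_deriv isOpen_ball hfsU hρ hsub
    have e2 : Complex.cderiv ρ (f t₀) u = deriv (f t₀) u :=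
      Complex.cderiv_eq_deriv isOpen_ball hftU hρ hsub
    have hsph : sphere u ρ ⊆ closedBall z₀ (3*ρ) :=
      (sphere_subset_closedBall.trans (hsub.trans hball3))
    have hcs : ContinuousOn (f s) (sphere u ρ) :=
      (hfsU.continuousOn.mono (sphere_subset_closedBall.trans hsub))
    have hct : ContinuousOn (f t₀) (sphere u ρ) :=
      (hftU.continuousOn.mono (sphere_subset_closedBall.trans hsub))
    have e3 : Complex.cderiv ρ (f s - f t₀) u =
        Complex.cderiv ρ (f s) u - Complex.cderiv ρ (f t₀) u :=
      Complex.cderiv_sub hρ hcs hct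
    have e4 : ‖Complex.cderiv ρ (f s - f t₀) u‖ ≤ ((cc/4) * ρ) / ρ := by
      apply Complex.norm_cderiv_le hρ
      intro w hw
      have := hclose w (hsph hw)
      simpa using this
    rw [e3, e1, e2] at e4
    have e5 : ((cc/4) * ρ) / ρ = cc/4 := by field_simp
    rw [e5] at e4
    have tri : ‖deriv (f s) u - c₀‖ ≤
        ‖deriv (f s) u - deriv (f t₀) u‖ + ‖deriv (f t₀) u - c₀‖ := by
      have := norm_add_le (deriv (f s) u - deriv (f t₀) u) (deriv (f t₀) u - c₀)
      simpa using this
    have := hderb u (by rwa [mem_closedBall])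
    linarith
  -- mean value
  have hsubA : closedBall z₀ ρ₁ ⊆ stdAnnulus (D.r s) := by
    refine subset_trans ?_ hAs
    exact closedBall_subset_closedBall (by linarith)
  have hdiffat : ∀ x ∈ closedBall z₀ ρ₁, DifferentiableAt ℂ (fun w => f s w - c₀ * w) x := by
    intro x hx
    have h1 : DifferentiableAt ℂ (f s) x :=
      hfsd.differentiableAt ((isOpen_stdAnnulus (D.r s)).mem_nhds (hsubA hx))
    exact h1.sub ((differentiableAt_id.const_mul c₀))
  have hderF : ∀ x ∈ closedBall z₀ ρ₁, ‖deriv (fun w => f s w - c₀ * w) x‖ ≤ cc/2 := by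
    intro x hx
    have h1 : DifferentiableAt ℂ (f s) x :=
      hfsd.differentiableAt ((isOpen_stdAnnulus (D.r s)).mem_nhds (hsubA hx))
    have h2 : HasDerivAt (fun w : ℂ => c₀ * w) c₀ x := by
      simpa using (hasDerivAt_id x).const_mul c₀
    have h3 : deriv (fun w => f s w - c₀ * w) x = deriv (f s) x - c₀ := by
      exact (h1.hasDerivAt.sub h2).deriv
    rw [h3]
    exact key x hx
  have hmv := Convex.norm_image_sub_le_of_norm_deriv_le hdiffat hderF (convex_closedBall z₀ ρ₁) hz hζ
  -- conclude
  have hexp : (fun w => f s w - c₀ * w) ζ - (fun w => f s w - c₀ * w) z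
      = (f s ζ - f s z) - c₀ * (ζ - z) := by ring
  rw [hexp] at hmv
  have h1 : ‖c₀ * (ζ - z)‖ - ‖f s ζ - f s z‖ ≤ ‖f s ζ - f s z - c₀ * (ζ - z)‖ := by
    have := norm_sub_norm_le (c₀ * (ζ - z)) (f s ζ - f s z)
    have h2 : ‖c₀ * (ζ - z) - (f s ζ - f s z)‖ = ‖f s ζ - f s z - c₀ * (ζ - z)‖ :=
      norm_sub_rev _ _
    linarith
  have h2 : ‖c₀ * (ζ - z)‖ = cc * ‖ζ - z‖ := by
    rw [norm_mul]
  rw [h2] at h1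
  linarith

lemma contOn_joint {d : ℝ≥0∞} (hd : 1 ≤ d) (D : CanonicalDomainSystem d) {f : ℝ → ℂ → ℂ}
    (hf : IsLoewnerChain d D f) :
    ContinuousOn (fun p : ℂ × ℝ => f p.2 p.1) (vfDomain D) := by
  rintro ⟨z₀, t₀⟩ hp
  obtain ⟨ρ, hρ, δ, hδ, hball, hctrl⟩ := unif_ctrl hd D hf hp
  rw [Metric.continuousWithinAt_iff]
  intro ε hε
  obtain ⟨δ', hδ'pos, hδ'le, hctrl'⟩ := hctrl (ε/2) (half_pos hε)
  have ht₀ : 0 ≤ t₀ := hp.1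
  have hA : closedBall z₀ (3*ρ) ⊆ stdAnnulus (D.r t₀) := hball t₀ ht₀ (by simp [hδ.le])
  have hz₀A : z₀ ∈ stdAnnulus (D.r t₀) := hA (mem_closedBall_self (by positivity))
  have hcont : ContinuousAt (f t₀) z₀ :=
    ((hf.holo t₀ ht₀).continuousOn).continuousAt ((isOpen_stdAnnulus _).mem_nhds hz₀A)
  obtain ⟨δ₂, hδ₂pos, hδ₂'⟩ := Metric.continuousAt_iff.mp hcont (ε/2) (half_pos hε)
  refine ⟨min δ' (min δ₂ ρ), by positivity, ?_⟩
  rintro ⟨w, s⟩ hq hdist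
  rw [Prod.dist_eq] at hdist
  have hd1 : dist w z₀ < min δ' (min δ₂ ρ) := (le_max_left _ _).trans_lt hdist
  have hd2 : dist s t₀ < min δ' (min δ₂ ρ) := (le_max_right _ _).trans_lt hdist
  have hwρ : dist w z₀ < ρ := hd1.trans_le ((min_le_right _ _).trans (min_le_right _ _))
  have hwδ₂ : dist w z₀ < δ₂ := hd1.trans_le ((min_le_right _ _).trans (min_le_left _ _))
  have hsδ' : |s - t₀| ≤ δ' := by
    rw [← Real.dist_eq]
    exact (hd2.trans_le (min_le_left _ _)).le
  have hwball : w ∈ closedBall z₀ (3*ρ) := by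
    rw [mem_closedBall]
    linarith
  have h1 : dist (f s w) (f t₀ w) ≤ ε/2 := by
    rw [Complex.dist_eq]
    exact hctrl' s hq.1 hsδ' w hwball
  have h2 : dist (f t₀ w) (f t₀ z₀) < ε/2 := hδ₂' hwδ₂
  calc dist (f s w) (f t₀ z₀) ≤ dist (f s w) (f t₀ w) + dist (f t₀ w) (f t₀ z₀) :=
        dist_triangle _ _ _
    _ < ε := by linarith

set_option maxHeartbeats 1000000 in
/-- Lemma 2.1: uniform reverse Lipschitz estimate for a Loewner chain on
compact subsets of `𝒟`. -/
theorem loewnerChain_reverse_lipschitz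
    (d : ℝ≥0∞) (hd : 1 ≤ d) (D : CanonicalDomainSystem d) (f : ℝ → ℂ → ℂ)
    (hf : IsLoewnerChain d D f)
    (K : Set (ℂ × ℝ)) (hK : IsCompact K) (hKD : K ⊆ vfDomain D) :
    ∃ M : ℝ, 0 < M ∧ ∀ z ζ : ℂ, ∀ t : ℝ, (z, t) ∈ K → (ζ, t) ∈ K →
      ‖ζ - z‖ ≤ M * ‖f t ζ - f t z‖ := by
  rcases K.eq_empty_or_nonempty with rfl | hKne
  · exact ⟨1, one_pos, fun z ζ t hz _ => absurd hz (notMem_empty _)⟩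
  have hdata : ∀ p : ℂ × ℝ, p ∈ K → ∃ ρ > 0, ∃ δ > 0, ∃ c > 0, ∀ s : ℝ, 0 ≤ s →
      |s - p.2| ≤ δ → ∀ z ∈ closedBall p.1 ρ, ∀ ζ ∈ closedBall p.1 ρ,
        c * ‖ζ - z‖ ≤ ‖f s ζ - f s z‖ := by
    intro p hp
    have hp' : (p.1, p.2) ∈ vfDomain D := by rw [Prod.mk.eta]; exact hKD hp
    exact near_diag hd D hf hp'
  choose! ρfn hρ δfn hδ cfn hc hest using hdata
  set U : ℂ × ℝ → Set (ℂ × ℝ) := fun p => ball p (min (ρfn p / 2) (δfn p / 2)) with hUdef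
  have hcover : K ⊆ ⋃ p ∈ K, U p := by
    intro p hp
    rw [mem_iUnion₂]
    exact ⟨p, hp, mem_ball_self (lt_min (by linarith [hρ p hp]) (by linarith [hδ p hp]))⟩
  obtain ⟨b', hb'K, hb'fin, hb'cov⟩ :=
    hK.elim_finite_subcover_image (fun p _ => isOpen_ball) hcover
  set F := hb'fin.toFinset with hFdef
  have hFK : ∀ p ∈ F, p ∈ K := fun p hp => hb'K (hb'fin.mem_toFinset.mp hp)
  have hFne : F.Nonempty := by
    obtain ⟨q, hq⟩ := hKne
    have := hb'cov hq
    rw [mem_iUnion₂] at this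
    obtain ⟨p, hp, _⟩ := this
    exact ⟨p, hb'fin.mem_toFinset.mpr hp⟩
  set η := F.inf' hFne (fun p => ρfn p / 2) with hηdef
  set c := F.inf' hFne (fun p => cfn p) with hcdef
  have hη : 0 < η := by
    rw [hηdef, Finset.lt_inf'_iff]
    exact fun p hp => by linarith [hρ p (hFK p hp)]
  have hcpos : 0 < c := by
    rw [hcdef, Finset.lt_inf'_iff]
    exact fun p hp => hc p (hFK p hp)
  -- near-diagonal global claim
  have hnear : ∀ z ζ : ℂ, ∀ t : ℝ, (z, t) ∈ K → (ζ, t) ∈ K →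
      ‖ζ - z‖ ≤ η →
      c * ‖ζ - z‖ ≤ ‖f t ζ - f t z‖ := by
    intro z ζ t hz hζ hdist
    have hcov := hb'cov hz
    rw [mem_iUnion₂] at hcov
    obtain ⟨p, hpb, hpball⟩ := hcov
    have hpK : p ∈ K := hb'K hpb
    have hpF : p ∈ F := hb'fin.mem_toFinset.mpr hpb
    rw [mem_ball, Prod.dist_eq] at hpball
    have hd1 : dist z p.1 < ρfn p / 2 :=
      ((le_max_left _ _).trans_lt hpball).trans_le (min_le_left _ _)
    have hd2 : dist t p.2 < δfn p / 2 :=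
      ((le_max_right _ _).trans_lt hpball).trans_le (min_le_right _ _)
    have ht0 : 0 ≤ t := (hKD hz).1
    have htp : |t - p.2| ≤ δfn p := by
      rw [← Real.dist_eq]
      linarith [hδ p hpK]
    have hzball : z ∈ closedBall p.1 (ρfn p) := by
      rw [mem_closedBall]
      linarith [hρ p hpK]
    have hηle : η ≤ ρfn p / 2 := Finset.inf'_le _ hpF
    have hζball : ζ ∈ closedBall p.1 (ρfn p) := by
      rw [mem_closedBall]
      have : dist ζ z = ‖ζ - z‖ := Complex.dist_eq ζ z
      calc dist ζ p.1 ≤ dist ζ z + dist z p.1 := dist_triangle _ _ _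
        _ ≤ ρfn p := by rw [this]; linarith
    have := hest p hpK t ht0 htp z hzball ζ hζball
    have hcle : c ≤ cfn p := Finset.inf'_le _ hpF
    calc c * ‖ζ - z‖ ≤ cfn p * ‖ζ - z‖ :=
          mul_le_mul_of_nonneg_right hcle (norm_nonneg _)
      _ ≤ ‖f t ζ - f t z‖ := this
  -- far set
  set E : Set ((ℂ × ℝ) × (ℂ × ℝ)) :=
    {q | q.1 ∈ K ∧ q.2 ∈ K ∧ q.1.2 = q.2.2 ∧ η ≤ dist q.1.1 q.2.1} with hEdef
  have hEcl : IsCompact E := by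
    have h1 : E = (K ×ˢ K) ∩ ({q : (ℂ × ℝ) × (ℂ × ℝ) | q.1.2 = q.2.2}
        ∩ {q : (ℂ × ℝ) × (ℂ × ℝ) | η ≤ dist q.1.1 q.2.1}) := by
      ext q
      simp only [hEdef, mem_setOf_eq, mem_inter_iff, mem_prod]
      tauto
    rw [h1]
    apply (hK.prod hK).inter_right
    apply IsClosed.inter
    · exact isClosed_eq continuous_fst.snd continuous_snd.snd
    · exact isClosed_le continuous_const (continuous_fst.fst.dist continuous_snd.fst)
  rcases E.eq_empty_or_nonempty with hEe | hEne
  · refine ⟨max (1/c) 1, lt_of_lt_of_le one_pos (le_max_right _ _), fun z ζ t hz hζ => ?_⟩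
    have hsmall : ‖ζ - z‖ ≤ η := by
      by_contra hcon
      push_neg at hcon
      have hmem : ((z,t),(ζ,t)) ∈ E := by
        refine ⟨hz, hζ, rfl, ?_⟩
        rw [Complex.dist_eq, norm_sub_rev]
        exact hcon.le
      rw [hEe] at hmem
      exact notMem_empty _ hmem
    have h1 := hnear z ζ t hz hζ hsmall
    calc ‖ζ - z‖ = (1/c) * (c * ‖ζ - z‖) := by field_simp
      _ ≤ (1/c) * ‖f t ζ - f t z‖ :=
          mul_le_mul_of_nonneg_left h1 (by positivity)
      _ ≤ max (1/c) 1 * ‖f t ζ - f t z‖ :=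
          mul_le_mul_of_nonneg_right (le_max_left _ _) (norm_nonneg _)
  · set G : ((ℂ × ℝ) × (ℂ × ℝ)) → ℝ := fun q => dist (f q.1.2 q.1.1) (f q.2.2 q.2.1) with hGdef
    have hΦ := contOn_joint hd D hf
    have hGc : ContinuousOn G E := by
      have h1 : ContinuousOn (fun q : (ℂ × ℝ) × (ℂ × ℝ) => f q.1.2 q.1.1) E :=
        hΦ.comp continuous_fst.continuousOn (fun q hq => hKD hq.1)
      have h2 : ContinuousOn (fun q : (ℂ × ℝ) × (ℂ × ℝ) => f q.2.2 q.2.1) E :=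
        hΦ.comp continuous_snd.continuousOn (fun q hq => hKD hq.2.1)
      exact continuous_dist.comp_continuousOn (h1.prodMk h2)
    obtain ⟨q₀, hq₀E, hq₀min'⟩ := hEcl.exists_isMinOn hEne hGc
    have hq₀min : ∀ q ∈ E, G q₀ ≤ G q := fun q hq => hq₀min' hq
    set m := G q₀ with hmdef
    have hm : 0 < m := by
      obtain ⟨hq1K, hq2K, hteq, hdistη⟩ := hq₀E
      rw [hmdef, hGdef]
      simp only
      rw [dist_pos]
      intro hcon
      have hz' : q₀.1.1 ∈ stdAnnulus (D.r q₀.1.2) := (hKD hq1K).2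
      have hζ' : q₀.2.1 ∈ stdAnnulus (D.r q₀.1.2) := by
        rw [hteq]; exact (hKD hq2K).2
      have hcon' : f q₀.1.2 q₀.1.1 = f q₀.1.2 q₀.2.1 := by rw [hcon, hteq]
      have heq := hf.inj q₀.1.2 (hKD hq1K).1 hz' hζ' hcon'
      rw [heq] at hdistη
      simp at hdistη
      linarith
    have hMpos : (0:ℝ) < max (1/c) (2/m) :=
      lt_of_lt_of_le (by positivity : (0:ℝ) < 2/m) (le_max_right _ _)
    refine ⟨max (1/c) (2/m), hMpos, fun z ζ t hz hζ => ?_⟩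
    rcases le_or_gt η (dist z ζ) with hfar | hnearc
    · have hqE : ((z,t),(ζ,t)) ∈ E := by
        rw [hEdef]; exact ⟨hz, hζ, rfl, hfar⟩
      have hGq : m ≤ dist (f t z) (f t ζ) := by
        simpa only [hGdef] using hq₀min _ hqE
      have hb2 : ‖ζ - z‖ ≤ 2 := by
        have h1 : ‖ζ‖ ≤ 1 := le_of_lt (hKD hζ).2.2
        have h2 : ‖z‖ ≤ 1 := le_of_lt (hKD hz).2.2
        have := norm_sub_le ζ z
        linarith
      have hGabs : dist (f t z) (f t ζ) = ‖f t ζ - f t z‖ := by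
        rw [Complex.dist_eq, norm_sub_rev]
      rw [hGabs] at hGq
      calc ‖ζ - z‖ ≤ 2 := hb2
        _ = (2/m) * m := by field_simp
        _ ≤ (2/m) * ‖f t ζ - f t z‖ :=
            mul_le_mul_of_nonneg_left hGq (by positivity)
        _ ≤ max (1/c) (2/m) * ‖f t ζ - f t z‖ :=
            mul_le_mul_of_nonneg_right (le_max_right _ _) (norm_nonneg _)
    · have hsmall : ‖ζ - z‖ ≤ η := by
        rw [Complex.dist_eq, norm_sub_rev] at hnearc
        exact hnearc.le
      have h1 := hnear z ζ t hz hζ hsmall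
      calc ‖ζ - z‖ = (1/c) * (c * ‖ζ - z‖) := by field_simp
        _ ≤ (1/c) * ‖f t ζ - f t z‖ :=
            mul_le_mul_of_nonneg_left h1 (by positivity)
        _ ≤ max (1/c) (2/m) * ‖f t ζ - f t z‖ :=
            mul_le_mul_of_nonneg_right (le_max_left _ _) (norm_nonneg _)
end
end

section
/- Let (D_t) = (𝔸_{r(t)}) be a canonical domain system and (f_t) a Loewner chain over (D_t). Set 𝒰 := {(w,t) : t ≥ 0, w ∈ f_t(D_t)} and 𝒟 := {(z,t) : t ≥ 0, z ∈ D_t}. If K is a compact subset of 𝒰, then K̂ := {(f_t^{-1}(w), t) : (w,t) ∈ K} is a compact subset of 𝒟. -/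
open MeasureTheory Set Filter Metric
open scoped ENNReal NNReal Topology

noncomputable section

lemma omegaFun_eq {x : ℝ} (hx0 : 0 < x) : omegaFun x = Real.pi / (-Real.log x) := by
  unfold omegaFun; rw [if_neg hx0.ne']; ring

lemma omegaFun_lt_omegaFun {x y : ℝ} (hx0 : 0 ≤ x) (hy1 : y < 1) (hxy : x < y) :
    omegaFun x < omegaFun y := by
  have hy0 : 0 < y := lt_of_le_of_lt hx0 hxy
  have hlogy : Real.log y < 0 := Real.log_neg hy0 hy1
  have hωy : omegaFun y = Real.pi / (-Real.log y) := omegaFun_eq hy0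
  rcases eq_or_lt_of_le hx0 with h0 | hx0'
  · rw [← h0]
    rw [show omegaFun 0 = 0 by unfold omegaFun; simp, hωy]
    exact div_pos Real.pi_pos (by linarith)
  · have hx1 : x < 1 := hxy.trans hy1
    have hlogx : Real.log x < 0 := Real.log_neg hx0' hx1
    rw [omegaFun_eq hx0', hωy]
    apply div_lt_div_of_pos_left Real.pi_pos (by linarith)
    have := Real.log_lt_log hx0' hxy
    linarith

lemma lt_of_omegaFun_lt {x y : ℝ} (hx0 : 0 ≤ x) (hx1 : x < 1) (hy0 : 0 ≤ y)
    (h : omegaFun x < omegaFun y) : x < y := by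
  by_contra hc
  push_neg at hc
  rcases eq_or_lt_of_le hc with h0 | h0
  · rw [h0] at h; exact lt_irrefl _ h
  · exact absurd h (not_lt.2 (omegaFun_lt_omegaFun hy0 hx1 h0).le)

lemma integrableOn_of_memLp {d : ℝ≥0∞} (hd : 1 ≤ d) {k : ℝ → ℝ} {a b : ℝ}
    (h : MemLp k d (volume.restrict (Icc a b))) : IntegrableOn k (Icc a b) := by
  have : IsFiniteMeasure (volume.restrict (Icc a b)) :=
    ⟨by rw [Measure.restrict_apply_univ]; exact measure_Icc_lt_top⟩
  exact h.integrable hd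

lemma key {d : ℝ≥0∞} (hd : 1 ≤ d) (D : CanonicalDomainSystem d) (f : ℝ → ℂ → ℂ)
    (hf : IsLoewnerChain d D f) {t : ℝ} (ht : 0 ≤ t) {z w : ℂ}
    (hz : z ∈ stdAnnulus (D.r t)) (hfz : f t z = w)
    {tn : ℕ → ℝ} {zn wn : ℕ → ℂ}
    (h0 : ∀ n, 0 ≤ tn n) (hzn : ∀ n, zn n ∈ stdAnnulus (D.r (tn n)))
    (hwn : ∀ n, f (tn n) (zn n) = wn n)
    (htlim : Tendsto tn atTop (𝓝 t)) (hwlim : Tendsto wn atTop (𝓝 w)) :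
    Tendsto zn atTop (𝓝 z) := by
  obtain ⟨ε₀, hε₀, hball₀⟩ : ∃ ε₀ > 0, closedBall z ε₀ ⊆ stdAnnulus (D.r t) :=
    (nhds_basis_closedBall.mem_iff.1 ((isOpen_stdAnnulus (D.r t)).mem_nhds hz))
  have main : ∀ ε : ℝ, 0 < ε → closedBall z ε ⊆ stdAnnulus (D.r t) →
      ∀ᶠ n in atTop, zn n ∈ closedBall z ε := by
    intro ε hε hball
    have rt0 : 0 ≤ D.r t := D.r_nonneg t ht
    have rt1 : D.r t < 1 := D.r_lt_one t ht
    set c : ℝ := ‖z‖ - ε with hc_def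
    have haz : 0 < ‖z‖ := lt_of_le_of_lt rt0 hz.1
    -- c > r t
    have hcz : D.r t < c := by
      by_contra hcon
      push_neg at hcon
      set ζ : ℂ := (↑(D.r t / ‖z‖) : ℂ) * z with hζdef
      have habs : ‖ζ‖ = D.r t := by
        rw [hζdef, norm_mul, Complex.norm_real, Real.norm_eq_abs, abs_of_nonneg (div_nonneg rt0 haz.le),
          div_mul_cancel₀ _ haz.ne']
      have hdist : dist ζ z ≤ ε := by
        have h1 : ζ - z = (↑(D.r t / ‖z‖ - 1) : ℂ) * z := by
          rw [Complex.ofReal_sub, Complex.ofReal_one, sub_mul, one_mul]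
        have h2 : ‖ζ - z‖ = ‖z‖ - D.r t := by
          rw [h1, norm_mul, Complex.norm_real, Real.norm_eq_abs,
            abs_of_nonpos (by
              have : D.r t / ‖z‖ ≤ 1 := (div_le_one haz).2 hz.1.le
              linarith)]
          field_simp
          ring
        have h3 : ‖z‖ - D.r t ≤ ε := by
          simp only [hc_def] at hcon
          linarith
        rw [dist_eq_norm, h2]
        exact h3
      have hmem : ζ ∈ stdAnnulus (D.r t) := hball (mem_closedBall.2 hdist)
      have h4 : D.r t < ‖ζ‖ := hmem.1
      rw [habs] at h4
      exact lt_irrefl _ h4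
    have hc0 : 0 < c := lt_of_le_of_lt rt0 hcz
    have hc1 : c < 1 := by
      have := hz.2
      simp only [hc_def]
      linarith
    -- choose S
    obtain ⟨S, hS0, hSt, hrS, hSev⟩ :
        ∃ S : ℝ, 0 ≤ S ∧ S ≤ t ∧ D.r S < c ∧ ∀ᶠ n in atTop, S ≤ tn n := by
      rcases eq_or_lt_of_le ht with h0t | h0t
      · exact ⟨t, ht, le_rfl, hcz, Eventually.of_forall fun n => h0t ▸ h0 n⟩
      · obtain ⟨g, hgLp, hgFTC⟩ := D.omega_ACd
        set W : ℝ → ℝ := fun x => omegaFun (D.r x) with hWdef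
        have hgInt : IntegrableOn g (Icc 0 t) := integrableOn_of_memLp hd (hgLp t h0t)
        have hprim : ContinuousOn (fun x => ∫ s in (0:ℝ)..x, g s) (Icc 0 t) := by
          have := intervalIntegral.continuousOn_primitive_interval
            (μ := volume) (f := g) (a := (0:ℝ)) (b := t) (by rwa [uIcc_of_le ht])
          rwa [uIcc_of_le ht] at this
        have hWcont : ContinuousOn W (Icc 0 t) := by
          apply ((continuousOn_const (c := W 0)).add hprim).congr
          intro x hx
          have := hgFTC 0 x le_rfl hx.1
          simp only [hWdef, Pi.add_apply]
          linarith [this]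
        have hWt : W t < omegaFun c := omegaFun_lt_omegaFun rt0 hc1 hcz
        haveI := right_nhdsWithin_Ico_neBot (α := ℝ) h0t
        have htend : Tendsto W (𝓝[Ico 0 t] t) (𝓝 (W t)) :=
          (hWcont t (right_mem_Icc.2 ht)).mono_left (nhdsWithin_mono t Ico_subset_Icc_self)
        have hev : ∀ᶠ S in 𝓝[Ico 0 t] t, W S < omegaFun c :=
          htend (Iio_mem_nhds hWt)
        obtain ⟨S, hWS, hSmem⟩ := (hev.and self_mem_nhdsWithin).exists
        refine ⟨S, hSmem.1, hSmem.2.le, ?_, ?_⟩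
        · exact lt_of_omegaFun_lt (D.r_nonneg S hSmem.1) (D.r_lt_one S hSmem.1) hc0.le hWS
        · exact htlim.eventually (eventually_ge_nhds hSmem.2)
    -- closed ball lies in all later annuli
    have hBs : ∀ s : ℝ, 0 ≤ s → S ≤ s → closedBall z ε ⊆ stdAnnulus (D.r s) := by
      intro s hs hSs ζ hζ
      have h1 : ‖z‖ - ‖ζ‖ ≤ ε := by
        have := norm_sub_norm_le z ζ
        rw [← dist_eq_norm, dist_comm] at this
        calc ‖z‖ - ‖ζ‖ = ‖z‖ - ‖ζ‖ := rfl
          _ ≤ dist ζ z := this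
          _ ≤ ε := mem_closedBall.1 hζ
      have h2 : D.r s ≤ D.r S := D.r_antitone hS0 hSs
      exact ⟨by simp only [hc_def] at hrS ⊢; linarith [h2, h1], (hball hζ).2⟩
    -- LC3 estimate
    set T : ℝ := t + 1 with hTdef
    have hST : S ≤ T := by linarith
    obtain ⟨k, hk0, hkLp, hkb⟩ := hf.lc3 S T hS0 hST (closedBall z ε)
      (isCompact_closedBall z ε) (hBs S hS0 le_rfl)
    have hkInt : IntegrableOn k (Icc S T) := integrableOn_of_memLp hd hkLp
    have hki : ∀ a b : ℝ, a ∈ Icc S T → b ∈ Icc S T → IntervalIntegrable k volume a b := by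
      intro a b ha hb
      apply IntegrableOn.intervalIntegrable
      apply hkInt.mono_set
      rw [uIcc_eq_union]
      exact union_subset (Icc_subset_Icc ha.1 hb.2) (Icc_subset_Icc hb.1 ha.2)
    set H : ℝ → ℝ := fun x => ∫ ξ in S..x, k ξ with hHdef
    have hHcont : ContinuousOn H (Icc S T) := by
      have := intervalIntegral.continuousOn_primitive_interval
        (μ := volume) (f := k) (a := S) (b := T) (by rwa [uIcc_of_le hST])
      rwa [uIcc_of_le hST] at this
    have htmem : t ∈ Icc S T := ⟨hSt, by linarith⟩
    have hHlim : Tendsto (fun n => H (tn n)) atTop (𝓝 (H t)) := by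
      apply (hHcont t htmem).tendsto.comp
      rw [tendsto_nhdsWithin_iff]
      refine ⟨htlim, ?_⟩
      filter_upwards [hSev, htlim.eventually (eventually_le_nhds (by linarith : t < T))]
        with n h1 h2
      exact ⟨h1, h2⟩
    -- the split estimate
    have hsplit : ∀ n, S ≤ tn n → tn n ≤ T → ∀ ζ ∈ closedBall z ε,
        ‖f (tn n) ζ - f t ζ‖ ≤ |H (tn n) - H t| := by
      intro n hSn hTn ζ hζ
      rcases le_total (tn n) t with hle | hle
      · have h1 := hkb ζ hζ (tn n) t hSn hle htmem.2
        have h2 : H t = H (tn n) + ∫ ξ in (tn n)..t, k ξ := by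
          rw [hHdef]
          exact (intervalIntegral.integral_add_adjacent_intervals
            (hki S (tn n) ⟨le_rfl, hST⟩ ⟨hSn, hTn⟩)
            (hki (tn n) t ⟨hSn, hTn⟩ htmem)).symm
        have h3 : (∫ ξ in (tn n)..t, k ξ) = H t - H (tn n) := by linarith
        calc ‖f (tn n) ζ - f t ζ‖ ≤ ∫ ξ in (tn n)..t, k ξ := h1
          _ = H t - H (tn n) := h3
          _ ≤ |H (tn n) - H t| := by rw [abs_sub_comm]; exact le_abs_self _
      · have h1 := hkb ζ hζ t (tn n) htmem.1 hle hTn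
        have h2 : H (tn n) = H t + ∫ ξ in t..(tn n), k ξ := by
          rw [hHdef]
          exact (intervalIntegral.integral_add_adjacent_intervals
            (hki S t ⟨le_rfl, hST⟩ htmem) (hki t (tn n) htmem ⟨hSn, hTn⟩)).symm
        have h3 : (∫ ξ in t..(tn n), k ξ) = H (tn n) - H t := by linarith
        calc ‖f (tn n) ζ - f t ζ‖
            = ‖f t ζ - f (tn n) ζ‖ := norm_sub_rev _ _
          _ ≤ ∫ ξ in t..(tn n), k ξ := h1
          _ = H (tn n) - H t := h3
          _ ≤ |H (tn n) - H t| := le_abs_self _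
    -- minimum on the sphere
    have hfc : ContinuousOn (f t) (stdAnnulus (D.r t)) := (hf.holo t ht).continuousOn
    have hsne : (sphere z ε).Nonempty := NormedSpace.sphere_nonempty.2 hε.le
    have hsub : sphere z ε ⊆ stdAnnulus (D.r t) :=
      (sphere_subset_closedBall).trans hball
    obtain ⟨ζ₀, hζ₀, hmin⟩ := (isCompact_sphere z ε).exists_isMinOn hsne
      (((hfc.mono hsub).sub continuousOn_const).norm)
    set m : ℝ := ‖f t ζ₀ - w‖ with hmdef
    have hm : 0 < m := by
      rw [hmdef, norm_pos_iff, sub_ne_zero]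
      intro hcon
      have : ζ₀ = z := hf.inj t ht (hsub hζ₀) (hball (mem_closedBall_self hε.le))
        (by rw [hcon, hfz])
      rw [this] at hζ₀
      simp only [mem_sphere, dist_self] at hζ₀
      linarith
    -- eventual inclusion
    have hw_ev : ∀ᶠ n in atTop, ‖wn n - w‖ < m / 5 := by
      have := hwlim (Metric.ball_mem_nhds w (by positivity : (0:ℝ) < m / 5))
      filter_upwards [this] with n hn
      rwa [mem_preimage, Metric.mem_ball, dist_eq_norm] at hn
    have hH_ev : ∀ᶠ n in atTop, |H (tn n) - H t| < m / 5 := by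
      have := hHlim (Metric.ball_mem_nhds (H t) (by positivity : (0:ℝ) < m / 5))
      filter_upwards [this] with n hn
      rwa [mem_preimage, Metric.mem_ball, Real.dist_eq] at hn
    filter_upwards [hSev, htlim.eventually (eventually_le_nhds (by linarith : t < T)),
      hw_ev, hH_ev] with n hSn hTn hwev hHev
    have hBn : closedBall z ε ⊆ stdAnnulus (D.r (tn n)) := hBs (tn n) (h0 n) hSn
    have hfb : ∀ ζ ∈ closedBall z ε, ‖f (tn n) ζ - f t ζ‖ < m / 5 := by
      intro ζ hζ
      exact lt_of_le_of_lt (hsplit n hSn hTn ζ hζ) hHev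
    -- existence of a preimage in the ball
    have hex : ∃ ζ ∈ closedBall z ε, f (tn n) ζ = wn n := by
      by_contra hcon
      push_neg at hcon
      have hne' : ∀ ζ ∈ closedBall z ε, f (tn n) ζ - wn n ≠ 0 := fun ζ hζ =>
        sub_ne_zero.2 (hcon ζ hζ)
      set φ : ℂ → ℂ := fun ζ => (f (tn n) ζ - wn n)⁻¹ with hφdef
      have hdiff : DifferentiableOn ℂ φ (closedBall z ε) := by
        apply DifferentiableOn.inv
        · exact ((hf.holo (tn n) (h0 n)).mono hBn).sub (differentiableOn_const _)
        · exact hne'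
      have hdcc : DiffContOnCl ℂ φ (ball z ε) :=
        DifferentiableOn.diffContOnCl (by rwa [closure_ball z hε.ne'])
      have hfr : ∀ ζ ∈ frontier (ball z ε), ‖φ ζ‖ ≤ (3 * m / 5)⁻¹ := by
        rw [frontier_ball z hε.ne']
        intro ζ hζ
        have h1 : m ≤ ‖f t ζ - w‖ := hmin hζ
        have h2 : ‖f (tn n) ζ - f t ζ‖ < m / 5 := hfb ζ (sphere_subset_closedBall hζ)
        have h4 : 3 * m / 5 ≤ ‖f (tn n) ζ - wn n‖ := by
          have hxy : (f (tn n) ζ - wn n) - (f t ζ - w)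
              = (f (tn n) ζ - f t ζ) - (wn n - w) := by ring
          have h5 : ‖(f (tn n) ζ - wn n) - (f t ζ - w)‖ ≤ m / 5 + m / 5 := by
            rw [hxy]
            exact (norm_sub_le _ _).trans (by linarith)
          have h6 := norm_sub_norm_le (f t ζ - w) (f (tn n) ζ - wn n)
          rw [← norm_neg ((f t ζ - w) - (f (tn n) ζ - wn n))] at h6
          simp only [neg_sub] at h6
          linarith
        rw [hφdef]
        simp only [norm_inv]
        exact inv_anti₀ (by linarith) h4
      have hzc : z ∈ closure (ball z ε) := by
        rw [closure_ball z hε.ne']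
        exact mem_closedBall_self hε.le
      have hmax := Complex.norm_le_of_forall_mem_frontier_norm_le isBounded_ball hdcc hfr hzc
      have hcen : ‖f (tn n) z - wn n‖ < 2 * m / 5 := by
        have hxy : f (tn n) z - wn n = (f (tn n) z - f t z) - (wn n - w) := by
          rw [hfz]; ring
        rw [hxy]
        have := norm_sub_le (f (tn n) z - f t z) (wn n - w)
        have h2 : ‖f (tn n) z - f t z‖ < m / 5 := hfb z (mem_closedBall_self hε.le)
        linarith
      have hpos : 0 < ‖f (tn n) z - wn n‖ :=
        norm_pos_iff.2 (hne' z (mem_closedBall_self hε.le))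
      have hφz : ‖φ z‖ = ‖f (tn n) z - wn n‖⁻¹ := by rw [hφdef]; simp [norm_inv]
      rw [hφz] at hmax
      have : (3 * m / 5)⁻¹ < ‖f (tn n) z - wn n‖⁻¹ :=
        inv_strictAnti₀ hpos (by linarith)
      linarith
    obtain ⟨ζ, hζmem, hζeq⟩ := hex
    have : zn n = ζ := hf.inj (tn n) (h0 n) (hzn n) (hBn hζmem) (by rw [hwn n, hζeq])
    rw [this]
    exact hζmem
  -- conclude convergence
  rw [Metric.tendsto_atTop]
  intro δ hδ
  have hε : 0 < min (δ / 2) ε₀ := lt_min (by linarith) hε₀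
  have hsub : closedBall z (min (δ / 2) ε₀) ⊆ stdAnnulus (D.r t) :=
    (closedBall_subset_closedBall (min_le_right _ _)).trans hball₀
  obtain ⟨N, hN⟩ := (main _ hε hsub).exists_forall_of_atTop
  refine ⟨N, fun n hn => ?_⟩
  have := hN n hn
  rw [mem_closedBall] at this
  calc dist (zn n) z ≤ min (δ / 2) ε₀ := this
    _ ≤ δ / 2 := min_le_left _ _
    _ < δ := by linarith

/-- Lemma 2.2: the preimage under the chain of a compact subset of
`𝒰 = {(w,t) : w ∈ f_t(D_t)}` is a compact subset of `𝒟`. -/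
theorem loewnerChain_compact_preimage
    (d : ℝ≥0∞) (hd : 1 ≤ d) (D : CanonicalDomainSystem d) (f : ℝ → ℂ → ℂ)
    (hf : IsLoewnerChain d D f)
    (K : Set (ℂ × ℝ)) (hK : IsCompact K)
    (hKU : K ⊆ {p : ℂ × ℝ | 0 ≤ p.2 ∧ p.1 ∈ f p.2 '' stdAnnulus (D.r p.2)}) :
    IsCompact {p : ℂ × ℝ | p.1 ∈ stdAnnulus (D.r p.2) ∧ (f p.2 p.1, p.2) ∈ K} ∧
      {p : ℂ × ℝ | p.1 ∈ stdAnnulus (D.r p.2) ∧ (f p.2 p.1, p.2) ∈ K} ⊆ vfDomain D := by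
  have hsub : {p : ℂ × ℝ | p.1 ∈ stdAnnulus (D.r p.2) ∧ (f p.2 p.1, p.2) ∈ K} ⊆ vfDomain D := by
    rintro ⟨z, t⟩ ⟨hz, hmem⟩
    exact ⟨(hKU hmem).1, hz⟩
  refine ⟨?_, hsub⟩
  have hCc : IsCompact ((closedBall (0:ℂ) 1) ×ˢ (Prod.snd '' K)) :=
    (isCompact_closedBall _ _).prod (hK.image continuous_snd)
  apply hCc.of_isClosed_subset
  · apply IsSeqClosed.isClosed
    intro x p hx hlim
    obtain ⟨q, hqK, φ, hφ, hqlim⟩ :=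
      hK.tendsto_subseq (x := fun n => (f (x n).2 (x n).1, (x n).2)) (fun n => (hx n).2)
    have hlim2 : Tendsto (fun n => x (φ n)) atTop (𝓝 p) := hlim.comp hφ.tendsto_atTop
    have htn : Tendsto (fun n => (x (φ n)).2) atTop (𝓝 q.2) := by
      simpa [Function.comp_def] using (continuous_snd.tendsto q).comp hqlim
    have htn' : Tendsto (fun n => (x (φ n)).2) atTop (𝓝 p.2) := by
      simpa [Function.comp_def] using (continuous_snd.tendsto p).comp hlim2
    have hq2 : q.2 = p.2 := tendsto_nhds_unique htn htn'
    have hwlim : Tendsto (fun n => f (x (φ n)).2 (x (φ n)).1) atTop (𝓝 q.1) := by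
      simpa [Function.comp_def] using (continuous_fst.tendsto q).comp hqlim
    have hznlim : Tendsto (fun n => (x (φ n)).1) atTop (𝓝 p.1) := by
      simpa [Function.comp_def] using (continuous_fst.tendsto p).comp hlim2
    obtain ⟨hq0, z, hzann, hfz⟩ :
        0 ≤ q.2 ∧ ∃ z ∈ stdAnnulus (D.r q.2), f q.2 z = q.1 := by
      obtain ⟨h1, h2⟩ := hKU hqK
      obtain ⟨z, hz1, hz2⟩ := h2
      exact ⟨h1, z, hz1, hz2⟩
    have hkey := key hd D f hf hq0 hzann hfz
      (tn := fun n => (x (φ n)).2) (zn := fun n => (x (φ n)).1)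
      (wn := fun n => f (x (φ n)).2 (x (φ n)).1)
      (fun n => (hKU (hx (φ n)).2).1) (fun n => (hx (φ n)).1) (fun n => rfl)
      htn hwlim
    have hpz : p.1 = z := tendsto_nhds_unique hznlim hkey
    constructor
    · rw [← hq2, hpz]; exact hzann
    · have : (f p.2 p.1, p.2) = q := by
        rw [← hq2, hpz]
        exact Prod.ext hfz rfl
      rw [this]; exact hqK
  · rintro ⟨z, t⟩ ⟨hz, hmem⟩
    refine ⟨?_, ⟨(f t z, t), hmem, rfl⟩⟩
    rw [mem_closedBall_zero_iff]
    exact le_of_lt hz.2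
end
end
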